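/- arXiv:2307.03983 — 4 statements merged into one kernel-verified Lean document; each statement's English description precedes it below -/
import Mathlib

section
/- The probability Q̃1 = P( Ps·Z > τ(G), Z < (G/α0 − 1)·(P0·G + 1)/Ps, log2(1+τ(G)) < Rs, G > α0 ) equals Σ_{i=1}^{M} C(M,i)·(−1)^i·e^{i/Ps}·[ v(α1, α0, i·P0/(Ps·α0), (i/Ps)·(1/α0 − P0) + 1) − u(α0, α1, i/(Ps·α0)) ], where C(M,i) is the binomial coefficient. -/
open MeasureTheory ProbabilityTheory Real
set_option maxHeartbeats 1000000

/-- The interference threshold `τ(g) = max{0, g/α₀ − 1}`. -/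
noncomputable def tau (α0 g : ℝ) : ℝ := max 0 (g / α0 - 1)

/-- The Gaussian error function `erf(x) = (2/√π) ∫₀ˣ e^{−t²} dt`. -/
noncomputable def erf (x : ℝ) : ℝ :=
  2 / Real.sqrt Real.pi * ∫ t in (0 : ℝ)..x, Real.exp (-t ^ 2)

/-- `u(a,b,c) = (e^{−a(c+1)} − e^{−b(c+1)}) / (c+1)`. -/
noncomputable def uFun (a b c : ℝ) : ℝ :=
  (Real.exp (-a * (c + 1)) - Real.exp (-b * (c + 1))) / (c + 1)

/-- `v(b,a,A,B) = (√π e^{B²/(4A)} / (2√A)) (erf(√A (b + B/(2A))) − erf(√A (a + B/(2A))))`. -/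
noncomputable def vFun (b a A B : ℝ) : ℝ :=
  Real.sqrt Real.pi * Real.exp (B ^ 2 / (4 * A)) / (2 * Real.sqrt A) *
    (erf (Real.sqrt A * (b + B / (2 * A))) - erf (Real.sqrt A * (a + B / (2 * A))))

section aux
open Set

lemma aux_exp_int (k a b : ℝ) (hk : k ≠ 0) :
    ∫ x in a..b, Real.exp (-(k * x)) = (Real.exp (-(k*a)) - Real.exp (-(k*b))) / k := by
  have h : ∀ x : ℝ, Real.exp (-(k * x)) = Real.exp ((-k) * x) := by intro x; ring_nf
  simp_rw [h]
  rw [intervalIntegral.integral_comp_mul_left (fun t => Real.exp t) (neg_ne_zero.mpr hk)]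
  rw [integral_exp, smul_eq_mul, ← neg_inv, div_eq_mul_inv]
  ring

lemma erf_diff (x y : ℝ) : erf y - erf x = 2 / Real.sqrt Real.pi * ∫ t in x..y, Real.exp (-t ^ 2) := by
  rw [erf, erf, ← mul_sub,
    intervalIntegral.integral_interval_sub_left
      ((Continuous.intervalIntegrable (by continuity) _ _))
      ((Continuous.intervalIntegrable (by continuity) _ _))]

lemma aux_gauss_int (A B a b : ℝ) (hA : 0 < A) :
    ∫ x in a..b, Real.exp (-(A * x^2 + B * x)) =
      Real.exp (B^2/(4*A)) * (Real.sqrt A)⁻¹ *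
        ∫ t in (Real.sqrt A * (a + B/(2*A)))..(Real.sqrt A * (b + B/(2*A))), Real.exp (-t^2) := by
  have hspos : 0 < Real.sqrt A := Real.sqrt_pos.mpr hA
  have hs : Real.sqrt A ≠ 0 := ne_of_gt hspos
  have hsq2 : Real.sqrt A ^ 2 = A := Real.sq_sqrt hA.le
  have h : ∀ x : ℝ, Real.exp (-(A * x^2 + B * x)) =
      Real.exp (B^2/(4*A)) * Real.exp (-(Real.sqrt A * x + B/(2*Real.sqrt A))^2) := by
    intro x
    rw [← Real.exp_add]
    congr 1
    field_simp
    linear_combination (16*x^2*A*Real.sqrt A^2 - 4*B^2) * hsq2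
  have he : ∀ c : ℝ, Real.sqrt A * c + B / (2 * Real.sqrt A) = Real.sqrt A * (c + B/(2*A)) := by
    intro c
    field_simp
    linear_combination (-B) * hsq2
  have hsub : (∫ x in a..b, Real.exp (-(Real.sqrt A * x + B/(2*Real.sqrt A))^2)) =
      (Real.sqrt A)⁻¹ *
        ∫ t in (Real.sqrt A * (a + B/(2*A)))..(Real.sqrt A * (b + B/(2*A))), Real.exp (-t^2) := by
    have h2 := intervalIntegral.integral_comp_mul_add (a := a) (b := b)
      (f := fun t => Real.exp (-t^2)) hs (B/(2*Real.sqrt A))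
    simp only [smul_eq_mul] at h2
    rw [he a, he b] at h2
    exact h2
  simp_rw [h]
  rw [intervalIntegral.integral_const_mul, hsub]
  ring

lemma vFun_eq (b a A B : ℝ) (hA : 0 < A) :
    vFun b a A B = ∫ x in a..b, Real.exp (-(A * x^2 + B * x)) := by
  have hπ : Real.sqrt Real.pi ≠ 0 := ne_of_gt (Real.sqrt_pos.mpr Real.pi_pos)
  have hs : Real.sqrt A ≠ 0 := ne_of_gt (Real.sqrt_pos.mpr hA)
  rw [aux_gauss_int A B a b hA, vFun, erf_diff]
  field_simp

lemma expMeasure_Iic (x : ℝ) (hx : 0 ≤ x) :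
    expMeasure 1 (Iic x) = ENNReal.ofReal (1 - Real.exp (-x)) := by
  have h : expMeasure 1 (Iic x) = ∫⁻ y in Iic x, exponentialPDF 1 y := by
    rw [expMeasure, gammaMeasure, withDensity_apply _ measurableSet_Iic]
    congr 1
  rw [h, lintegral_exponentialPDF_eq_antiDeriv one_pos x, if_pos hx]
  norm_num

lemma expMeasure_singleton (x : ℝ) : expMeasure 1 {x} = 0 := by
  rw [expMeasure, gammaMeasure]
  exact (withDensity_absolutelyContinuous _ _) (measure_singleton x)

end aux

open Set

/-- closed form for the probability `Q̃₁` appearing in the proof of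
Theorem 1 for the HSIC-PA scheme. -/
theorem hsic_pa_Q1_closed_form
    {Ω : Type*} [MeasurableSpace Ω] (μ : Measure Ω) [IsProbabilityMeasure μ]
    (M : ℕ) (hM : 1 ≤ M)
    (P0 Ps R0 Rs : ℝ) (hP0 : 0 < P0) (hPs : 0 < Ps) (hR0 : 0 < R0) (hRs : 0 < Rs)
    (ε0 εs α0 αs α1 : ℝ)
    (hε0 : ε0 = 2 ^ R0 - 1) (hεs : εs = 2 ^ Rs - 1)
    (hα0 : α0 = ε0 / P0) (hαs : αs = εs / Ps) (hα1 : α1 = (1 + εs) * α0)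
    (G : Ω → ℝ) (H : Fin M → Ω → ℝ)
    (hGmeas : Measurable G) (hHmeas : ∀ m, Measurable (H m))
    (hGnn : ∀ ω, 0 ≤ G ω) (hHnn : ∀ m ω, 0 ≤ H m ω)
    (hGdist : Measure.map G μ = expMeasure 1)
    (hHdist : ∀ m, Measure.map (H m) μ = expMeasure 1)
    (hIndep : iIndepFun
      (Fin.cons G H : Fin (M + 1) → Ω → ℝ) μ)
    (Z : Ω → ℝ) (hZ : ∀ ω, Z ω = ⨆ m : Fin M, H m ω)
    :
    (μ {ω | Ps * Z ω > tau α0 (G ω) ∧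
            Z ω < (G ω / α0 - 1) * (P0 * G ω + 1) / Ps ∧
            Real.logb 2 (1 + tau α0 (G ω)) < Rs ∧ G ω > α0}).toReal =
      ∑ i ∈ Finset.Icc 1 M,
        (M.choose i : ℝ) * (-1 : ℝ) ^ i * Real.exp ((i : ℝ) / Ps) *
          (vFun α1 α0 ((i : ℝ) * P0 / (Ps * α0)) (((i : ℝ) / Ps) * (1 / α0 - P0) + 1) -
            uFun α0 α1 ((i : ℝ) / (Ps * α0))) := by
  classical
  haveI : Nonempty (Fin M) := ⟨⟨0, by omega⟩⟩
  -- positivity facts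
  have h2R0 : (1:ℝ) < 2 ^ R0 := by
    have h := (Real.rpow_lt_rpow_left_iff (x := 2) one_lt_two (y := 0) (z := R0)).mpr hR0
    simpa using h
  have h2Rs : (1:ℝ) < 2 ^ Rs := by
    have h := (Real.rpow_lt_rpow_left_iff (x := 2) one_lt_two (y := 0) (z := Rs)).mpr hRs
    simpa using h
  have hε0pos : 0 < ε0 := by rw [hε0]; linarith
  have hεspos : 0 < εs := by rw [hεs]; linarith
  have hα0pos : 0 < α0 := by rw [hα0]; positivity
  have hα1gt : α0 < α1 := by rw [hα1]; nlinarith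
  -- the functions and the set
  set ℓf : ℝ → ℝ := fun g => (g/α0 - 1)/Ps with hℓf
  set hf : ℝ → ℝ := fun g => (g/α0 - 1)*(P0*g+1)/Ps with hhf
  set F : ℝ → ℝ := fun z => (1 - Real.exp (-z))^M with hFdef
  set S : Set (ℝ×ℝ) := {p | p.1 ∈ Ioo α0 α1 ∧ p.2 ∈ Ioo (ℓf p.1) (hf p.1)} with hS
  have hℓcont : Continuous ℓf := by fun_prop
  have hhcont : Continuous hf := by fun_prop
  have hSmeas : MeasurableSet S := by
    have : S = ((fun p : ℝ × ℝ => p.1) ⁻¹' Ioo α0 α1) ∩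
        ({p : ℝ×ℝ | ℓf p.1 < p.2} ∩ {p : ℝ×ℝ | p.2 < hf p.1}) := by
      ext p; simp [hS, mem_Ioo, and_assoc]
    rw [this]
    refine (measurable_fst (measurableSet_Ioo)).inter (MeasurableSet.inter ?_ ?_)
    · exact measurableSet_lt (hℓcont.measurable.comp measurable_fst) measurable_snd
    · exact measurableSet_lt measurable_snd (hhcont.measurable.comp measurable_fst)
  -- event rewriting
  have hEvent : {ω | Ps * Z ω > tau α0 (G ω) ∧
            Z ω < (G ω / α0 - 1) * (P0 * G ω + 1) / Ps ∧
            Real.logb 2 (1 + tau α0 (G ω)) < Rs ∧ G ω > α0} =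
      (fun ω => (G ω, Z ω)) ⁻¹' S := by
    ext ω
    simp only [mem_setOf_eq, mem_preimage, hS, mem_Ioo, gt_iff_lt]
    constructor
    · rintro ⟨h1, h2, h3, h4⟩
      have htau : tau α0 (G ω) = G ω / α0 - 1 := by
        rw [tau, max_eq_right]
        have : 1 < G ω / α0 := (one_lt_div hα0pos).mpr h4
        linarith
      have hlt1 : G ω < α1 := by
        rw [htau] at h3
        have hone : 1 + (G ω / α0 - 1) = G ω / α0 := by ring
        rw [hone] at h3
        have hxpos : 0 < G ω / α0 := div_pos (hα0pos.trans h4) hα0pos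
        have := (Real.logb_lt_iff_lt_rpow one_lt_two hxpos).mp h3
        rw [hα1]
        have : G ω / α0 < 1 + εs := by rw [hεs]; linarith
        calc G ω = (G ω / α0) * α0 := by field_simp
        _ < (1 + εs) * α0 := by apply mul_lt_mul_of_pos_right this hα0pos
      refine ⟨⟨h4, hlt1⟩, ?_, h2⟩
      rw [htau] at h1
      show (G ω/α0 - 1)/Ps < Z ω
      rw [div_lt_iff₀ hPs]
      linarith [h1]
    · rintro ⟨⟨h4, h5⟩, h6, h7⟩
      have htau : tau α0 (G ω) = G ω / α0 - 1 := by
        rw [tau, max_eq_right]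
        have : 1 < G ω / α0 := (one_lt_div hα0pos).mpr h4
        linarith
      refine ⟨?_, h7, ?_, h4⟩
      · rw [htau]
        have h6' : (G ω/α0 - 1)/Ps < Z ω := h6
        rw [div_lt_iff₀ hPs] at h6'
        linarith
      · rw [htau]
        have hone : 1 + (G ω / α0 - 1) = G ω / α0 := by ring
        rw [hone]
        have hxpos : 0 < G ω / α0 := div_pos (hα0pos.trans h4) hα0pos
        rw [Real.logb_lt_iff_lt_rpow one_lt_two hxpos]
        have : G ω / α0 < 1 + εs := by
          rw [div_lt_iff₀ hα0pos]
          rw [hα1] at h5; linarith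
        rw [hεs] at this; linarith
  rw [hEvent]
  -- measurability of Z
  have hZmeas : Measurable Z := by
    have hZ' : Z = fun ω => Finset.univ.sup' Finset.univ_nonempty (fun m => H m ω) := by
      funext ω; rw [hZ ω, ← Finset.sup'_univ_eq_ciSup]
    rw [hZ']
    have := Finset.measurable_sup' (s := (Finset.univ : Finset (Fin M)))
      Finset.univ_nonempty (fun m _ => hHmeas m)
    convert this using 1
    funext ω
    simp [Finset.sup'_apply]
  -- independence of G and Z
  have hconsmeas : ∀ i, Measurable ((Fin.cons G H : Fin (M+1) → Ω → ℝ) i) := by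
    intro i
    refine Fin.cases ?_ ?_ i
    · simpa using hGmeas
    · intro m; simpa using hHmeas m
  have hGZindep : IndepFun G Z μ := by
    have h1 := hIndep.indepFun_finset {0} (Finset.univ.erase 0)
      (by simp) hconsmeas
    have hmem : ∀ m : Fin M, (m.succ : Fin (M+1)) ∈ Finset.univ.erase (0 : Fin (M+1)) := by
      intro m; simp [Fin.succ_ne_zero]
    set φ1 : (({0} : Finset (Fin (M+1))) → ℝ) → ℝ :=
      fun v => v ⟨0, by simp⟩ with hφ1
    set φ2 : ((Finset.univ.erase (0 : Fin (M+1))) → ℝ) → ℝ :=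
      fun v => Finset.univ.sup' Finset.univ_nonempty
        (fun m : Fin M => v ⟨m.succ, hmem m⟩) with hφ2
    have hφ1m : Measurable φ1 := measurable_pi_apply _
    have hφ2m : Measurable φ2 := by
      have := Finset.measurable_sup' (s := (Finset.univ : Finset (Fin M)))
        Finset.univ_nonempty
        (f := fun (m : Fin M) (v : ((Finset.univ.erase (0 : Fin (M+1))) → ℝ)) =>
          v ⟨m.succ, hmem m⟩)
        (fun m _ => measurable_pi_apply _)
      convert this using 1
      funext v
      simp [hφ2, Finset.sup'_apply]
    have h2 := h1.comp hφ1m hφ2m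
    have e1 : (φ1 ∘ fun a (i : ({0} : Finset (Fin (M+1)))) => (Fin.cons G H : Fin (M+1) → Ω → ℝ) (i : Fin (M+1)) a) = G := by
      funext ω; simp [hφ1]
    have e2 : (φ2 ∘ fun a (i : (Finset.univ.erase (0 : Fin (M+1)))) => (Fin.cons G H : Fin (M+1) → Ω → ℝ) (i : Fin (M+1)) a) = Z := by
      funext ω
      simp only [hφ2, Function.comp_apply, Fin.cons_succ]
      rw [hZ ω, ← Finset.sup'_univ_eq_ciSup]
    rw [e1, e2] at h2
    exact h2
  have hmap : μ.map (fun ω => (G ω, Z ω)) = (expMeasure 1).prod (μ.map Z) := by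
    rw [← hGdist]
    exact (indepFun_iff_map_prod_eq_prod_map_map hGmeas.aemeasurable hZmeas.aemeasurable).mp hGZindep
  have hμE : μ ((fun ω => (G ω, Z ω)) ⁻¹' S) = ((expMeasure 1).prod (μ.map Z)) S := by
    rw [← hmap, Measure.map_apply (hGmeas.prodMk hZmeas) hSmeas]
  rw [hμE]
  -- law of Z
  have hνIic : ∀ z : ℝ, 0 ≤ z → μ.map Z (Iic z) = ENNReal.ofReal (F z) := by
    intro z hz
    rw [Measure.map_apply hZmeas measurableSet_Iic]
    have hpre : Z ⁻¹' (Iic z) = ⋂ i ∈ Finset.univ.erase (0 : Fin (M+1)),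
        ((Fin.cons G H : Fin (M+1) → Ω → ℝ) i) ⁻¹' (Iic z) := by
      ext ω
      simp only [mem_preimage, mem_Iic, Set.mem_iInter, Finset.mem_erase, Finset.mem_univ,
        and_true]
      rw [hZ ω, ciSup_le_iff (Set.Finite.bddAbove (Set.finite_range _))]
      constructor
      · intro h i hi
        have : i = (i.pred hi).succ := (Fin.succ_pred i hi).symm
        rw [this, Fin.cons_succ]
        exact h _
      · intro h m
        have := h m.succ (Fin.succ_ne_zero m)
        rwa [Fin.cons_succ] at this
    rw [hpre]
    rw [hIndep.meas_biInter (fun i _ => ⟨Iic z, measurableSet_Iic, rfl⟩)]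
    have hterm : ∀ i ∈ Finset.univ.erase (0 : Fin (M+1)),
        μ (((Fin.cons G H : Fin (M+1) → Ω → ℝ) i) ⁻¹' (Iic z)) = ENNReal.ofReal (1 - Real.exp (-z)) := by
      intro i hi
      have hi0 : i ≠ 0 := (Finset.mem_erase.mp hi).1
      have : i = (i.pred hi0).succ := (Fin.succ_pred i hi0).symm
      rw [this, Fin.cons_succ, ← Measure.map_apply (hHmeas _) measurableSet_Iic,
        hHdist, expMeasure_Iic z hz]
    rw [Finset.prod_congr rfl hterm, Finset.prod_const]
    have hcard : (Finset.univ.erase (0 : Fin (M+1))).card = M := by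
      rw [Finset.card_erase_of_mem (Finset.mem_univ _)]
      simp
    rw [hcard, hFdef]
    rw [← ENNReal.ofReal_pow]
    have : Real.exp (-z) ≤ 1 := Real.exp_le_one_iff.mpr (by linarith)
    linarith
  have hνsingle : ∀ x : ℝ, μ.map Z {x} = 0 := by
    intro x
    rw [Measure.map_apply hZmeas (measurableSet_singleton x)]
    have hsub : Z ⁻¹' {x} ⊆ ⋃ m : Fin M, H m ⁻¹' {x} := by
      intro ω hω
      simp only [mem_preimage, mem_singleton_iff] at hω
      have : Z ω = Finset.univ.sup' Finset.univ_nonempty (fun m => H m ω) := by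
        rw [hZ ω, ← Finset.sup'_univ_eq_ciSup]
      obtain ⟨m, _, hm⟩ := Finset.exists_mem_eq_sup' (Finset.univ_nonempty) (fun m => H m ω)
      refine Set.mem_iUnion.mpr ⟨m, ?_⟩
      simp only [mem_preimage, mem_singleton_iff]
      rw [← hω, this, hm]
    refine le_antisymm (le_trans (measure_mono hsub) ?_) zero_le
    refine le_trans (measure_iUnion_le _) ?_
    have : ∀ m : Fin M, μ (H m ⁻¹' {x}) = 0 := by
      intro m
      rw [← Measure.map_apply (hHmeas m) (measurableSet_singleton x), hHdist,
        expMeasure_singleton]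
    simp [this]
  haveI : IsProbabilityMeasure (μ.map Z) := Measure.isProbabilityMeasure_map hZmeas.aemeasurable
  have hFnn : ∀ z : ℝ, 0 ≤ z → 0 ≤ F z := by
    intro z hz
    rw [hFdef]
    have : Real.exp (-z) ≤ 1 := Real.exp_le_one_iff.mpr (by linarith)
    exact pow_nonneg (by linarith) M
  have hFmono : ∀ x y : ℝ, 0 ≤ x → x ≤ y → F x ≤ F y := by
    intro x y hx hxy
    rw [hFdef]
    have h1 : Real.exp (-x) ≤ 1 := Real.exp_le_one_iff.mpr (by linarith)
    have h2 : Real.exp (-y) ≤ Real.exp (-x) := Real.exp_le_exp.mpr (by linarith)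
    exact pow_le_pow_left₀ (by linarith) (by linarith) M
  have hνIoo : ∀ a b : ℝ, 0 ≤ a → a ≤ b → μ.map Z (Ioo a b) = ENNReal.ofReal (F b - F a) := by
    intro a b ha hab
    have h2 : μ.map Z (Ioo a b) = μ.map Z (Ioc a b) := by
      rw [← Ioc_sdiff_right, measure_diff_null (hνsingle b)]
    rw [h2, ← Iic_sdiff_Iic,
      measure_diff (Iic_subset_Iic.mpr hab) measurableSet_Iic.nullMeasurableSet
        (measure_ne_top _ _),
      hνIic b (ha.trans hab), hνIic a ha, ← ENNReal.ofReal_sub _ (hFnn a ha)]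
  -- bounds on the slice for g in Ioo α0 α1
  have hℓnn : ∀ g ∈ Ioo α0 α1, 0 ≤ ℓf g := by
    intro g hg
    have h1 : (1:ℝ) < g / α0 := (one_lt_div hα0pos).mpr hg.1
    have : (0:ℝ) ≤ g / α0 - 1 := by linarith
    exact div_nonneg this hPs.le
  have hℓh : ∀ g ∈ Ioo α0 α1, ℓf g ≤ hf g := by
    intro g hg
    have h1 : (1:ℝ) < g / α0 := (one_lt_div hα0pos).mpr hg.1
    have hgpos : 0 < g := hα0pos.trans hg.1
    have h2 : (g/α0 - 1) ≤ (g/α0 - 1)*(P0*g+1) := by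
      nlinarith [mul_nonneg (by linarith : (0:ℝ) ≤ g/α0 - 1) (by positivity : (0:ℝ) ≤ P0*g)]
    exact (div_le_div_iff_of_pos_right hPs).mpr h2
  have hcontF : Continuous F := by
    rw [hFdef]
    exact (continuous_const.sub (Real.continuous_exp.comp continuous_neg)).pow M
  have hprod : ((expMeasure 1).prod (μ.map Z)) S =
      ∫⁻ g in Ioo α0 α1, ENNReal.ofReal (Real.exp (-g) * (F (hf g) - F (ℓf g))) ∂volume := by
    rw [Measure.prod_apply hSmeas]
    have hslice : ∀ g : ℝ, (μ.map Z) (Prod.mk g ⁻¹' S) =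
        (Ioo α0 α1).indicator (fun g => ENNReal.ofReal (F (hf g) - F (ℓf g))) g := by
      intro g
      by_cases hg : g ∈ Ioo α0 α1
      · rw [indicator_of_mem hg]
        have hpre : Prod.mk g ⁻¹' S = Ioo (ℓf g) (hf g) := by
          ext z
          simp only [mem_preimage, hS, mem_setOf_eq]
          exact ⟨fun h => h.2, fun h => ⟨hg, h⟩⟩
        rw [hpre, hνIoo _ _ (hℓnn g hg) (hℓh g hg)]
      · rw [indicator_of_notMem hg]
        have hpre : Prod.mk g ⁻¹' S = ∅ := by
          ext z
          simp only [mem_preimage, hS, mem_setOf_eq, mem_empty_iff_false, iff_false]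
          intro h
          exact hg h.1
        rw [hpre, measure_empty]
    rw [lintegral_congr hslice, lintegral_indicator measurableSet_Ioo _]
    have hmeasg : Measurable fun g => ENNReal.ofReal (F (hf g) - F (ℓf g)) :=
      ((hcontF.comp hhcont).sub (hcontF.comp hℓcont)).measurable.ennreal_ofReal
    have hpdfmeas : Measurable (gammaPDF 1 1) := by
      unfold gammaPDF
      exact (measurable_gammaPDFReal 1 1).ennreal_ofReal
    rw [expMeasure, gammaMeasure, restrict_withDensity measurableSet_Ioo,
      lintegral_withDensity_eq_lintegral_mul _ hpdfmeas hmeasg]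
    refine setLIntegral_congr_fun measurableSet_Ioo (fun g hg => ?_)
    have hgpos : 0 ≤ g := (hα0pos.trans hg.1).le
    simp only [Pi.mul_apply]
    rw [show gammaPDF 1 1 g = exponentialPDF 1 g from rfl,
      exponentialPDF_of_nonneg hgpos, ← ENNReal.ofReal_mul (by positivity)]
    congr 1
    rw [one_mul, one_mul]
  rw [hprod]
  have hcont : Continuous (fun g => Real.exp (-g) * (F (hf g) - F (ℓf g))) :=
    (Real.continuous_exp.comp continuous_neg).mul
      ((hcontF.comp hhcont).sub (hcontF.comp hℓcont))
  have hint : IntegrableOn (fun g => Real.exp (-g) * (F (hf g) - F (ℓf g))) (Ioo α0 α1) volume :=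
    (hcont.integrableOn_Icc).mono_set Ioo_subset_Icc_self
  have hnn : 0 ≤ᵐ[volume.restrict (Ioo α0 α1)]
      fun g => Real.exp (-g) * (F (hf g) - F (ℓf g)) :=
    (ae_restrict_iff' measurableSet_Ioo).mpr (ae_of_all _ fun g hg =>
      mul_nonneg (Real.exp_nonneg _) (sub_nonneg.mpr (hFmono _ _ (hℓnn g hg) (hℓh g hg))))
  rw [← ofReal_integral_eq_lintegral_ofReal hint hnn,
    ENNReal.toReal_ofReal (integral_nonneg_of_ae hnn)]
  rw [← integral_Ioc_eq_integral_Ioo, ← intervalIntegral.integral_of_le hα1gt.le]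
  -- binomial expansion of F
  have hFexp : ∀ z : ℝ, F z = ∑ i ∈ Finset.range (M+1),
      (M.choose i : ℝ) * (-1:ℝ)^i * Real.exp (-((i:ℝ) * z)) := by
    intro z
    rw [hFdef]
    calc (1 - Real.exp (-z))^M = (-Real.exp (-z) + 1)^M := by ring
    _ = ∑ i ∈ Finset.range (M+1), (-Real.exp (-z))^i * 1^(M-i) * (M.choose i : ℝ) :=
        add_pow (-Real.exp (-z)) 1 M
    _ = _ := by
      refine Finset.sum_congr rfl fun i _ => ?_
      rw [one_pow, mul_one, neg_pow, ← Real.exp_nat_mul, mul_neg]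
      ring
  have hpt : ∀ g : ℝ, Real.exp (-g) * (F (hf g) - F (ℓf g)) =
      ∑ i ∈ Finset.Icc 1 M, (M.choose i : ℝ) * (-1:ℝ)^i *
        (Real.exp (-g - (i:ℝ) * hf g) - Real.exp (-g - (i:ℝ) * ℓf g)) := by
    intro g
    rw [hFexp (hf g), hFexp (ℓf g), ← Finset.sum_sub_distrib, Finset.mul_sum]
    have h1 : ∀ i ∈ Finset.range (M+1),
        Real.exp (-g) * ((M.choose i : ℝ) * (-1:ℝ)^i * Real.exp (-((i:ℝ) * hf g)) -
          (M.choose i : ℝ) * (-1:ℝ)^i * Real.exp (-((i:ℝ) * ℓf g))) =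
        (M.choose i : ℝ) * (-1:ℝ)^i *
          (Real.exp (-g - (i:ℝ) * hf g) - Real.exp (-g - (i:ℝ) * ℓf g)) := by
      intro i _
      have e1 : Real.exp (-g - (i:ℝ) * hf g) = Real.exp (-g) * Real.exp (-((i:ℝ) * hf g)) := by
        rw [sub_eq_add_neg, Real.exp_add]
      have e2 : Real.exp (-g - (i:ℝ) * ℓf g) = Real.exp (-g) * Real.exp (-((i:ℝ) * ℓf g)) := by
        rw [sub_eq_add_neg, Real.exp_add]
      rw [e1, e2]; ring
    rw [Finset.sum_congr rfl h1]
    refine (Finset.sum_subset ?_ ?_).symm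
    · intro x hx
      simp only [Finset.mem_Icc] at hx
      simp only [Finset.mem_range]
      omega
    · intro x hx hx2
      simp only [Finset.mem_range] at hx
      simp only [Finset.mem_Icc] at hx2
      have hx0 : x = 0 := by omega
      subst hx0
      simp
  simp_rw [hpt]
  -- continuity of the summands
  have hcontE : ∀ c : ℝ, Continuous (fun g : ℝ => Real.exp (-g - c * hf g)) := fun c =>
    Real.continuous_exp.comp (continuous_neg.sub (continuous_const.mul hhcont))
  have hcontE' : ∀ c : ℝ, Continuous (fun g : ℝ => Real.exp (-g - c * ℓf g)) := fun c =>
    Real.continuous_exp.comp (continuous_neg.sub (continuous_const.mul hℓcont))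
  rw [intervalIntegral.integral_finset_sum
    (f := fun (i : ℕ) (g : ℝ) => (M.choose i : ℝ) * (-1:ℝ)^i *
      (Real.exp (-g - (i:ℝ) * hf g) - Real.exp (-g - (i:ℝ) * ℓf g)))
    (fun i _ =>
    ((continuous_const.mul (((hcontE (i:ℝ))).sub (hcontE' (i:ℝ)))).intervalIntegrable α0 α1))]
  refine Finset.sum_congr rfl fun i hi => ?_
  have hi1 : 1 ≤ i := (Finset.mem_Icc.mp hi).1
  have hipos : (0:ℝ) < (i:ℝ) := by exact_mod_cast (by omega : 0 < i)
  rw [intervalIntegral.integral_const_mul,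
    intervalIntegral.integral_sub ((hcontE (i:ℝ)).intervalIntegrable α0 α1)
      ((hcontE' (i:ℝ)).intervalIntegrable α0 α1)]
  -- evaluate the two integrals
  have hU : ∫ g in α0..α1, Real.exp (-g - (i:ℝ) * ℓf g) =
      Real.exp ((i:ℝ)/Ps) * uFun α0 α1 ((i:ℝ)/(Ps*α0)) := by
    have hk : (i:ℝ)/(Ps*α0) + 1 ≠ 0 := by positivity
    have hpt2 : ∀ g : ℝ, Real.exp (-g - (i:ℝ) * ℓf g) =
        Real.exp ((i:ℝ)/Ps) * Real.exp (-((((i:ℝ)/(Ps*α0)) + 1) * g)) := by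
      intro g
      rw [← Real.exp_add]
      congr 1
      simp only [hℓf]
      field_simp
      ring
    simp_rw [hpt2]
    rw [intervalIntegral.integral_const_mul, aux_exp_int _ _ _ hk]
    congr 1
    rw [uFun]
    ring_nf
  have hV : ∫ g in α0..α1, Real.exp (-g - (i:ℝ) * hf g) =
      Real.exp ((i:ℝ)/Ps) *
        vFun α1 α0 ((i:ℝ) * P0 / (Ps * α0)) (((i:ℝ) / Ps) * (1 / α0 - P0) + 1) := by
    have hA : 0 < (i:ℝ) * P0 / (Ps * α0) := by positivity
    have hpt3 : ∀ g : ℝ, Real.exp (-g - (i:ℝ) * hf g) =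
        Real.exp ((i:ℝ)/Ps) * Real.exp (-(((i:ℝ) * P0 / (Ps * α0)) * g^2 +
          (((i:ℝ) / Ps) * (1 / α0 - P0) + 1) * g)) := by
      intro g
      rw [← Real.exp_add]
      congr 1
      simp only [hhf]
      field_simp
      ring
    simp_rw [hpt3]
    rw [intervalIntegral.integral_const_mul, ← vFun_eq _ _ _ _ hA]
  rw [hU, hV]
  ring
end

section
/- The probability Q̃2 = P( Ps·Z > τ(G), Z > (G/α0 − 1)·(P0·G + 1)/Ps, log2(1 + Ps·Z/(P0·G + 1)) < Rs, G > α0 ) equals Σ_{i=1}^{M} C(M,i)·(−1)^i·[ e^{−i·αs}·u(α0, α1, i·αs·P0) − e^{i/Ps}·v(α1, α0, i·P0/(Ps·α0), (i/Ps)·(1/α0 − P0) + 1) ], where C(M,i) is the binomial coefficient. -/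
open MeasureTheory ProbabilityTheory Real

section Aux
open intervalIntegral Finset Set

lemma integral_exp_neg_mul' (c a b : ℝ) (hc : c ≠ 0) :
    ∫ x in a..b, Real.exp (-(c*x)) = (Real.exp (-(c*a)) - Real.exp (-(c*b)))/c := by
  have h : ∀ x : ℝ, HasDerivAt (fun y => -Real.exp (-(c*y))/c) (Real.exp (-(c*x))) x := by
    intro x
    have : HasDerivAt (fun y => -(c*y)) (-c) x := by
      simpa using ((hasDerivAt_id x).const_mul (-c))
    have := (this.exp.const_mul (-1/c))
    have e1 : (fun y => -Real.exp (-(c*y))/c) = fun y => -1/c * Real.exp (-(c*y)) := by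
      ext y; ring
    rw [e1]
    exact this.congr_deriv (by field_simp)
  rw [intervalIntegral.integral_eq_sub_of_hasDerivAt (fun x _ => h x)
    (Continuous.intervalIntegrable (by continuity) a b)]
  ring

lemma integral_exp_neg_sq (u w : ℝ) :
    ∫ s in u..w, Real.exp (-s^2) = Real.sqrt Real.pi / 2 * (erf w - erf u) := by
  have hint : ∀ y : ℝ, IntervalIntegrable (fun s => Real.exp (-s^2)) MeasureTheory.volume 0 y :=
    fun y => Continuous.intervalIntegrable (by continuity) _ _
  have h : (∫ s in (0:ℝ)..w, Real.exp (-s^2)) - ∫ s in (0:ℝ)..u, Real.exp (-s^2)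
      = ∫ s in u..w, Real.exp (-s^2) :=
    intervalIntegral.integral_interval_sub_left (hint w) (hint u)
  rw [← h, erf, erf]
  have hπ : Real.sqrt Real.pi ≠ 0 := by positivity
  field_simp

lemma integral_gauss (A B a b : ℝ) (hA : 0 < A) :
    ∫ g in a..b, Real.exp (-A*g^2 - B*g) = vFun b a A B := by
  have hsA : (0:ℝ) < Real.sqrt A := Real.sqrt_pos.2 hA
  set c := B / (2*A) with hc
  have h1 : ∀ g : ℝ, Real.exp (-A*g^2 - B*g)
      = Real.exp (B^2/(4*A)) * Real.exp (-(Real.sqrt A * (g + c))^2) := by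
    intro g
    rw [← Real.exp_add]
    congr 1
    have : (Real.sqrt A * (g + c))^2 = A * (g+c)^2 := by
      rw [mul_pow, Real.sq_sqrt hA.le]
    rw [this, hc]
    field_simp
    ring
  simp_rw [h1]
  rw [intervalIntegral.integral_const_mul]
  have h2 : (∫ g in a..b, Real.exp (-(Real.sqrt A * (g + c))^2))
      = ∫ t in (a+c)..(b+c), Real.exp (-(Real.sqrt A * t)^2) :=
    intervalIntegral.integral_comp_add_right (fun t => Real.exp (-(Real.sqrt A * t)^2)) c
  rw [h2]
  have h3 : (∫ t in (a+c)..(b+c), Real.exp (-(Real.sqrt A * t)^2))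
      = (Real.sqrt A)⁻¹ • ∫ s in (Real.sqrt A * (a+c))..(Real.sqrt A * (b+c)), Real.exp (-s^2) :=
    intervalIntegral.integral_comp_mul_left (fun s => Real.exp (-s^2)) hsA.ne'
  rw [h3, integral_exp_neg_sq, vFun, smul_eq_mul, show B/(2*A) = c from rfl]
  generalize erf (Real.sqrt A * (b + c)) = E1
  generalize erf (Real.sqrt A * (a + c)) = E2
  field_simp

lemma term1 (i : ℕ) (α0 α1 αs P0 : ℝ) (hαs : 0 < αs) (hP0 : 0 < P0) :
    ∫ g in α0..α1, Real.exp (-g) * Real.exp (-((i:ℝ) * (αs*(P0*g+1))))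
      = Real.exp (-(i:ℝ)*αs) * uFun α0 α1 ((i:ℝ)*αs*P0) := by
  have h : ∀ g : ℝ, Real.exp (-g) * Real.exp (-((i:ℝ) * (αs*(P0*g+1))))
      = Real.exp (-(i:ℝ)*αs) * Real.exp (-(((i:ℝ)*αs*P0+1) * g)) := by
    intro g; rw [← Real.exp_add, ← Real.exp_add]; ring_nf
  simp_rw [h]
  rw [intervalIntegral.integral_const_mul,
    integral_exp_neg_mul' _ _ _ (by positivity), uFun]
  congr 2 <;> ring

lemma term2 (i : ℕ) (hi : 0 < i) (α0 α1 Ps P0 : ℝ) (hα0 : 0 < α0) (hPs : 0 < Ps)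
    (hP0 : 0 < P0) :
    ∫ g in α0..α1, Real.exp (-g) * Real.exp (-((i:ℝ) * ((g/α0-1)*(P0*g+1)/Ps)))
      = Real.exp ((i:ℝ)/Ps) *
          vFun α1 α0 ((i:ℝ)*P0/(Ps*α0)) (((i:ℝ)/Ps)*(1/α0-P0)+1) := by
  have hi' : (0:ℝ) < (i:ℝ) := by exact_mod_cast hi
  set A := (i:ℝ)*P0/(Ps*α0) with hA
  set B := ((i:ℝ)/Ps)*(1/α0-P0)+1 with hB
  have h : ∀ g : ℝ, Real.exp (-g) * Real.exp (-((i:ℝ) * ((g/α0-1)*(P0*g+1)/Ps)))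
      = Real.exp ((i:ℝ)/Ps) * Real.exp (-A*g^2 - B*g) := by
    intro g; rw [← Real.exp_add, ← Real.exp_add]
    congr 1
    rw [hA, hB]
    field_simp
    ring
  simp_rw [h]
  rw [intervalIntegral.integral_const_mul, integral_gauss _ _ _ _ (by positivity)]

lemma F_expand (M : ℕ) (t : ℝ) :
    (1 - Real.exp (-t))^M
      = ∑ i ∈ Finset.range (M+1), (M.choose i : ℝ) * (-1)^i * Real.exp (-((i:ℝ)*t)) := by
  have h : (1 - Real.exp (-t)) = (-Real.exp (-t)) + 1 := by ring
  rw [h, add_pow]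
  refine Finset.sum_congr rfl fun i _ => ?_
  rw [neg_pow, ← Real.exp_nat_mul]
  ring_nf

lemma F_diff (M : ℕ) (s t : ℝ) :
    (1 - Real.exp (-t))^M - (1 - Real.exp (-s))^M
      = ∑ i ∈ Finset.Icc 1 M, (M.choose i : ℝ) * (-1)^i *
          (Real.exp (-((i:ℝ)*t)) - Real.exp (-((i:ℝ)*s))) := by
  have hr : Finset.range (M+1) = insert 0 (Finset.Icc 1 M) := by
    ext x; simp only [Finset.mem_range, Finset.mem_insert, Finset.mem_Icc]; omega
  rw [F_expand, F_expand, ← Finset.sum_sub_distrib]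
  rw [hr, Finset.sum_insert (by simp)]
  simp only [Nat.cast_zero, zero_mul, neg_zero, Real.exp_zero, sub_self]
  rw [zero_add]
  exact Finset.sum_congr rfl fun i _ => by ring

end Aux

set_option maxHeartbeats 1000000

/-- closed form for the probability `Q̃₂` appearing in the proof of
Theorem 1 for the HSIC-PA scheme. -/
theorem hsic_pa_Q2_closed_form
    {Ω : Type*} [MeasurableSpace Ω] (μ : Measure Ω) [IsProbabilityMeasure μ]
    (M : ℕ) (hM : 1 ≤ M)
    (P0 Ps R0 Rs : ℝ) (hP0 : 0 < P0) (hPs : 0 < Ps) (hR0 : 0 < R0) (hRs : 0 < Rs)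
    (ε0 εs α0 αs α1 : ℝ)
    (hε0 : ε0 = 2 ^ R0 - 1) (hεs : εs = 2 ^ Rs - 1)
    (hα0 : α0 = ε0 / P0) (hαs : αs = εs / Ps) (hα1 : α1 = (1 + εs) * α0)
    (G : Ω → ℝ) (H : Fin M → Ω → ℝ)
    (hGmeas : Measurable G) (hHmeas : ∀ m, Measurable (H m))
    (hGnn : ∀ ω, 0 ≤ G ω) (hHnn : ∀ m ω, 0 ≤ H m ω)
    (hGdist : Measure.map G μ = expMeasure 1)
    (hHdist : ∀ m, Measure.map (H m) μ = expMeasure 1)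
    (hIndep : iIndepFun
      (Fin.cons G H : Fin (M + 1) → Ω → ℝ) μ)
    (Z : Ω → ℝ) (hZ : ∀ ω, Z ω = ⨆ m : Fin M, H m ω)
    :
    (μ {ω | Ps * Z ω > tau α0 (G ω) ∧
            Z ω > (G ω / α0 - 1) * (P0 * G ω + 1) / Ps ∧
            Real.logb 2 (1 + Ps * Z ω / (P0 * G ω + 1)) < Rs ∧ G ω > α0}).toReal =
      ∑ i ∈ Finset.Icc 1 M,
        (M.choose i : ℝ) * (-1 : ℝ) ^ i *
          (Real.exp (-(i : ℝ) * αs) * uFun α0 α1 ((i : ℝ) * αs * P0) -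
           Real.exp ((i : ℝ) / Ps) *
             vFun α1 α0 ((i : ℝ) * P0 / (Ps * α0))
               (((i : ℝ) / Ps) * (1 / α0 - P0) + 1)) := by
  classical
  -- basic positivity facts
  have h2R : (1:ℝ) < 2 ^ Rs := by
    have := Real.rpow_lt_rpow_left_iff (x := (2:ℝ)) (y := 0) (z := Rs) one_lt_two
    simpa using this.2 hRs
  have h2R0 : (1:ℝ) < 2 ^ R0 := by
    have := Real.rpow_lt_rpow_left_iff (x := (2:ℝ)) (y := 0) (z := R0) one_lt_two
    simpa using this.2 hR0
  have hεs_pos : 0 < εs := by rw [hεs]; linarith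
  have hε0_pos : 0 < ε0 := by rw [hε0]; linarith
  have hα0_pos : 0 < α0 := by rw [hα0]; positivity
  have hαs_pos : 0 < αs := by rw [hαs]; positivity
  have hα1_pos : 0 < α1 := by rw [hα1]; positivity
  have hα01 : α0 < α1 := by
    rw [hα1]; nlinarith
  haveI : Nonempty (Fin M) := ⟨⟨0, hM⟩⟩
  -- Z as a finite sup
  have hZ' : ∀ ω, Z ω = Finset.univ.sup' Finset.univ_nonempty (fun m => H m ω) := by
    intro ω; rw [hZ, Finset.sup'_univ_eq_ciSup]
  have hZmeas : Measurable Z := by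
    have : Z = Finset.univ.sup' Finset.univ_nonempty (fun m => H m) := by
      funext ω; rw [hZ' ω, Finset.sup'_apply]
    rw [this]
    exact Finset.measurable_sup' _ (fun m _ => hHmeas m)
  have hZnn : ∀ ω, 0 ≤ Z ω := by
    intro ω
    rw [hZ' ω]
    exact le_trans (hHnn ⟨0, hM⟩ ω)
      (Finset.le_sup' (f := fun m => H m ω) (Finset.mem_univ (⟨0, hM⟩ : Fin M)))
  -- shorthand
  set Lf : ℝ → ℝ := fun g => (g/α0-1)*(P0*g+1)/Ps with hLf
  set Uf : ℝ → ℝ := fun g => αs*(P0*g+1) with hUf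
  -- event rewriting
  have hEvent : {ω | Ps * Z ω > tau α0 (G ω) ∧
            Z ω > (G ω / α0 - 1) * (P0 * G ω + 1) / Ps ∧
            Real.logb 2 (1 + Ps * Z ω / (P0 * G ω + 1)) < Rs ∧ G ω > α0}
      = (fun ω => (G ω, Z ω)) ⁻¹' {p : ℝ × ℝ | α0 < p.1 ∧ Lf p.1 < p.2 ∧ p.2 < Uf p.1} := by
    ext ω
    have hg0 : 0 ≤ G ω := hGnn ω
    have hz0 : 0 ≤ Z ω := hZnn ω
    have hden : (0:ℝ) < P0 * G ω + 1 := by nlinarith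
    have harg : (0:ℝ) < 1 + Ps * Z ω / (P0 * G ω + 1) := by positivity
    have hlogb : Real.logb 2 (1 + Ps * Z ω / (P0 * G ω + 1)) < Rs
        ↔ Z ω < Uf (G ω) := by
      rw [Real.logb_lt_iff_lt_rpow one_lt_two harg, hUf]
      constructor
      · intro h
        have h5 : Ps * Z ω / (P0 * G ω + 1) < εs := by rw [hεs]; linarith
        rw [div_lt_iff₀ hden] at h5
        have hps : εs / Ps * Ps = εs := div_mul_cancel₀ _ hPs.ne'
        rw [hαs]
        nlinarith
      · intro h
        have h5 : Ps * Z ω < εs * (P0 * G ω + 1) := by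
          rw [hαs] at h
          have hps : εs / Ps * Ps = εs := div_mul_cancel₀ _ hPs.ne'
          nlinarith
        rw [← div_lt_iff₀ hden] at h5
        rw [hεs] at h5
        linarith
    simp only [Set.mem_setOf_eq, Set.mem_preimage, gt_iff_lt]
    constructor
    · rintro ⟨h1, h2, h3, h4⟩
      exact ⟨h4, by simpa [hLf] using h2, hlogb.1 h3⟩
    · rintro ⟨h4, h2, h3⟩
      have hga : 1 < G ω / α0 := (one_lt_div hα0_pos).2 h4
      have htau : tau α0 (G ω) = G ω / α0 - 1 := by
        rw [tau, max_eq_right]; linarith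
      refine ⟨?_, by simpa [hLf] using h2, hlogb.2 h3, h4⟩
      rw [htau]
      rw [hLf] at h2
      simp only at h2
      rw [div_lt_iff₀ hPs] at h2
      nlinarith [mul_nonneg (le_of_lt (by linarith : (0:ℝ) < G ω / α0 - 1))
        (mul_nonneg hP0.le hg0)]
  -- independence of G and Z
  set X : Fin (M+1) → Ω → ℝ := Fin.cons G H with hX
  have hXmeas : ∀ i, Measurable (X i) := by
    intro i
    refine Fin.cases ?_ ?_ i
    · simpa [hX] using hGmeas
    · intro m; simpa [hX] using hHmeas m
  set T : Finset (Fin (M+1)) := Finset.univ.image Fin.succ with hT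
  have hmemT : ∀ m : Fin M, Fin.succ m ∈ T := by
    intro m; rw [hT]; exact Finset.mem_image_of_mem _ (Finset.mem_univ m)
  have h0T : (0 : Fin (M+1)) ∉ T := by
    simp only [hT, Finset.mem_image]
    rintro ⟨m, -, hm⟩
    exact Fin.succ_ne_zero m hm
  have hdisj : Disjoint ({0} : Finset (Fin (M+1))) T :=
    Finset.disjoint_singleton_left.2 h0T
  have hGZ : IndepFun G Z μ := by
    have hind := hIndep.indepFun_finset {0} T hdisj hXmeas
    have hφ1 : Measurable (fun v : {i // i ∈ ({0} : Finset (Fin (M+1)))} → ℝ =>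
        v ⟨0, Finset.mem_singleton_self 0⟩) := measurable_pi_apply _
    have hφ2 : Measurable (fun v : {i // i ∈ T} → ℝ =>
        Finset.univ.sup' Finset.univ_nonempty
          (fun m : Fin M => v ⟨Fin.succ m, hmemT m⟩)) := by
      have h := Finset.measurable_sup' (s := (Finset.univ : Finset (Fin M)))
        Finset.univ_nonempty
        (f := fun (m : Fin M) (v : {i // i ∈ T} → ℝ) => v ⟨Fin.succ m, hmemT m⟩)
        (fun m _ => measurable_pi_apply _)
      have heq : (Finset.univ.sup' Finset.univ_nonempty
          (fun (m : Fin M) (v : {i // i ∈ T} → ℝ) => v ⟨Fin.succ m, hmemT m⟩))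
          = fun v : {i // i ∈ T} → ℝ =>
            Finset.univ.sup' Finset.univ_nonempty
              (fun m : Fin M => v ⟨Fin.succ m, hmemT m⟩) := by
        funext v; rw [Finset.sup'_apply]
      rwa [heq] at h
    have hcomp := hind.comp hφ1 hφ2
    have he1 : ((fun v : {i // i ∈ ({0} : Finset (Fin (M+1)))} → ℝ =>
        v ⟨0, Finset.mem_singleton_self 0⟩) ∘ (fun a (i : {i // i ∈ ({0} : Finset (Fin (M+1)))}) => X i a))
        = G := by
      funext a; simp [hX]
    have he2 : ((fun v : {i // i ∈ T} → ℝ =>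
        Finset.univ.sup' Finset.univ_nonempty
          (fun m : Fin M => v ⟨Fin.succ m, hmemT m⟩)) ∘
        (fun a (i : {i // i ∈ T}) => X i a)) = Z := by
      funext a
      simp only [Function.comp_apply, hX, Fin.cons_succ]
      exact (hZ' a).symm
    rwa [he1, he2] at hcomp
  -- distribution facts
  haveI : IsProbabilityMeasure (expMeasure 1) := isProbabilityMeasure_expMeasure one_pos
  set ν : Measure ℝ := μ.map Z with hν
  haveI : IsProbabilityMeasure ν := Measure.isProbabilityMeasure_map hZmeas.aemeasurable
  have hexp_eq : expMeasure 1 = MeasureTheory.volume.withDensity (exponentialPDF 1) := rfl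
  have hexp_Iic : ∀ z : ℝ, 0 ≤ z →
      expMeasure 1 (Set.Iic z) = ENNReal.ofReal (1 - Real.exp (-z)) := by
    intro z hz
    rw [hexp_eq, withDensity_apply _ measurableSet_Iic,
      lintegral_exponentialPDF_eq_antiDeriv one_pos z, if_pos hz, one_mul]
  have hexp_sing : ∀ z : ℝ, expMeasure 1 {z} = 0 := by
    intro z
    rw [hexp_eq, withDensity_apply _ (measurableSet_singleton z)]
    exact setLIntegral_measure_zero _ _ (measure_singleton z)
  have hexp_Iio : ∀ z : ℝ, 0 ≤ z →
      expMeasure 1 (Set.Iio z) = ENNReal.ofReal (1 - Real.exp (-z)) := by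
    intro z hz
    rw [← Set.Iic_diff_right, measure_diff_null (hexp_sing z), hexp_Iic z hz]
  have hprod : ∀ A : Set ℝ, MeasurableSet A →
      μ (⋂ m : Fin M, H m ⁻¹' A) = ∏ m : Fin M, μ (H m ⁻¹' A) := by
    intro A hA
    have h := hIndep.meas_biInter (S := T) (s := fun i => X i ⁻¹' A)
      (fun i _ => ⟨A, hA, rfl⟩)
    have h1 : (⋂ i ∈ T, X i ⁻¹' A) = ⋂ m : Fin M, H m ⁻¹' A := by
      ext ω
      simp only [Set.mem_iInter, Set.mem_preimage, hT, Finset.mem_image, Finset.mem_univ,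
        true_and]
      constructor
      · intro hall m
        have := hall (Fin.succ m) ⟨m, rfl⟩
        simpa [hX, Fin.cons_succ] using this
      · rintro hall i ⟨m, rfl⟩
        simpa [hX, Fin.cons_succ] using hall m
    have h2 : (∏ i ∈ T, μ (X i ⁻¹' A)) = ∏ m : Fin M, μ (H m ⁻¹' A) := by
      rw [hT, Finset.prod_image (fun m _ n _ h => Fin.succ_injective _ h)]
      exact Finset.prod_congr rfl fun m _ => by rw [hX, Fin.cons_succ]
    rw [← h1, h]
    exact h2
  have hHexp : ∀ (m : Fin M) (A : Set ℝ), MeasurableSet A → μ (H m ⁻¹' A) = expMeasure 1 A := by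
    intro m A hA
    rw [← Measure.map_apply (hHmeas m) hA, hHdist m]
  have hνIic : ∀ z : ℝ, 0 ≤ z → ν (Set.Iic z) = ENNReal.ofReal ((1 - Real.exp (-z))^M) := by
    intro z hz
    have hnn : 0 ≤ 1 - Real.exp (-z) := by
      have : Real.exp (-z) ≤ 1 := Real.exp_le_one_iff.2 (by linarith)
      linarith
    rw [hν, Measure.map_apply hZmeas measurableSet_Iic]
    have hset : Z ⁻¹' Set.Iic z = ⋂ m : Fin M, H m ⁻¹' Set.Iic z := by
      ext ω
      simp only [Set.mem_preimage, Set.mem_Iic, Set.mem_iInter]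
      rw [hZ' ω, Finset.sup'_le_iff]
      simp
    rw [hset, hprod _ measurableSet_Iic]
    rw [Finset.prod_congr rfl (fun m _ => by
      rw [hHexp m _ measurableSet_Iic, hexp_Iic z hz])]
    rw [Finset.prod_const, Finset.card_univ, Fintype.card_fin,
      ← ENNReal.ofReal_pow hnn]
  have hνIio : ∀ z : ℝ, 0 ≤ z → ν (Set.Iio z) = ENNReal.ofReal ((1 - Real.exp (-z))^M) := by
    intro z hz
    have hnn : 0 ≤ 1 - Real.exp (-z) := by
      have : Real.exp (-z) ≤ 1 := Real.exp_le_one_iff.2 (by linarith)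
      linarith
    rw [hν, Measure.map_apply hZmeas measurableSet_Iio]
    have hset : Z ⁻¹' Set.Iio z = ⋂ m : Fin M, H m ⁻¹' Set.Iio z := by
      ext ω
      simp only [Set.mem_preimage, Set.mem_Iio, Set.mem_iInter]
      rw [hZ' ω, Finset.sup'_lt_iff]
      simp
    rw [hset, hprod _ measurableSet_Iio]
    rw [Finset.prod_congr rfl (fun m _ => by
      rw [hHexp m _ measurableSet_Iio, hexp_Iio z hz])]
    rw [Finset.prod_const, Finset.card_univ, Fintype.card_fin,
      ← ENNReal.ofReal_pow hnn]
  have hνIoo : ∀ a b : ℝ, 0 ≤ a → a < b →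
      ν (Set.Ioo a b) = ENNReal.ofReal ((1 - Real.exp (-b))^M - (1 - Real.exp (-a))^M) := by
    intro a b ha hab
    have hnna : 0 ≤ 1 - Real.exp (-a) := by
      have : Real.exp (-a) ≤ 1 := Real.exp_le_one_iff.2 (by linarith)
      linarith
    have hset : Set.Ioo a b = Set.Iio b \ Set.Iic a := by
      ext x
      simp only [Set.mem_Ioo, Set.mem_diff, Set.mem_Iio, Set.mem_Iic, not_le]
      tauto
    have hsub : Set.Iic a ⊆ Set.Iio b := fun x hx => lt_of_le_of_lt hx hab
    rw [hset, measure_diff hsub measurableSet_Iic.nullMeasurableSet (measure_ne_top ν _),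
      hνIio b (le_trans ha hab.le), hνIic a ha,
      ← ENNReal.ofReal_sub _ (pow_nonneg hnna M)]
  -- joint law
  have hpair : μ.map (fun ω => (G ω, Z ω)) = (expMeasure 1).prod ν := by
    rw [← hGdist, hν]
    exact (indepFun_iff_map_prod_eq_prod_map_map hGmeas.aemeasurable hZmeas.aemeasurable).mp hGZ
  have hLcont : Continuous Lf := by
    rw [hLf]; fun_prop
  have hUcont : Continuous Uf := by
    rw [hUf]; fun_prop
  set S : Set (ℝ × ℝ) := {p : ℝ × ℝ | α0 < p.1 ∧ Lf p.1 < p.2 ∧ p.2 < Uf p.1} with hSdef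
  have hS : MeasurableSet S := by
    refine MeasurableSet.inter ?_ (MeasurableSet.inter ?_ ?_)
    · exact measurableSet_lt measurable_const measurable_fst
    · exact measurableSet_lt (hLcont.measurable.comp measurable_fst) measurable_snd
    · exact measurableSet_lt measurable_snd (hUcont.measurable.comp measurable_fst)
  have hμE : μ {ω | Ps * Z ω > tau α0 (G ω) ∧
            Z ω > (G ω / α0 - 1) * (P0 * G ω + 1) / Ps ∧
            Real.logb 2 (1 + Ps * Z ω / (P0 * G ω + 1)) < Rs ∧ G ω > α0}
      = ∫⁻ g, ν (Prod.mk g ⁻¹' S) ∂(expMeasure 1) := by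
    rw [hEvent, ← Measure.map_apply (hGmeas.prodMk hZmeas) hS, hpair, Measure.prod_apply hS]
  have hker : ∀ g : ℝ, ν (Prod.mk g ⁻¹' S)
      = (Set.Ioo α0 α1).indicator (fun g => ENNReal.ofReal
          ((1 - Real.exp (-(Uf g)))^M - (1 - Real.exp (-(Lf g)))^M)) g := by
    intro g
    have hpre : Prod.mk g ⁻¹' S = if α0 < g then Set.Ioo (Lf g) (Uf g) else ∅ := by
      split_ifs with h
      · ext z; simp [hSdef, Set.mem_Ioo, h]
      · ext z; simp [hSdef, h]
    rw [hpre]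
    by_cases h1 : α0 < g
    · rw [if_pos h1]
      have hgpos : 0 < g := lt_trans hα0_pos h1
      have hg1 : 1 < g / α0 := (one_lt_div hα0_pos).2 h1
      have hps : εs / Ps * Ps = εs := div_mul_cancel₀ _ hPs.ne'
      by_cases h2 : g < α1
      · have hLpos : 0 < Lf g := by
          rw [hLf]
          exact div_pos (mul_pos (by linarith) (by nlinarith)) hPs
        have hd : g / α0 - 1 < εs := by
          have h3 : g / α0 < α1 / α0 := by
            rw [div_lt_div_iff_of_pos_right hα0_pos]
            exact h2
          have h4 : α1 / α0 = 1 + εs := by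
            rw [hα1]; field_simp
          linarith [h3.trans_eq h4]
        have hk : (0:ℝ) < P0 * g + 1 := by nlinarith
        have key : (g/α0-1)*(P0*g+1) < εs*(P0*g+1) := mul_lt_mul_of_pos_right hd hk
        have hLU : Lf g < Uf g := by
          calc Lf g = (g/α0-1)*(P0*g+1) * (1/Ps) := by rw [hLf]; ring
            _ < εs*(P0*g+1)*(1/Ps) := mul_lt_mul_of_pos_right key (by positivity)
            _ = Uf g := by rw [hUf, hαs]; ring
        rw [hνIoo _ _ hLpos.le hLU, Set.indicator_of_mem (Set.mem_Ioo.2 ⟨h1, h2⟩)]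
      · have hd : εs ≤ g / α0 - 1 := by
          have h3 : α1 / α0 ≤ g / α0 := by
            rw [div_le_div_iff_of_pos_right hα0_pos]
            exact not_lt.1 h2
          have h4 : α1 / α0 = 1 + εs := by
            rw [hα1]; field_simp
          linarith [h4 ▸ h3]
        have hk : (0:ℝ) < P0 * g + 1 := by nlinarith
        have key : εs*(P0*g+1) ≤ (g/α0-1)*(P0*g+1) := mul_le_mul_of_nonneg_right hd hk.le
        have hUL : Uf g ≤ Lf g := by
          calc Uf g = εs*(P0*g+1)*(1/Ps) := by rw [hUf, hαs]; ring
            _ ≤ (g/α0-1)*(P0*g+1) * (1/Ps) := mul_le_mul_of_nonneg_right key (by positivity)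
            _ = Lf g := by rw [hLf]; ring
        rw [Set.Ioo_eq_empty (not_lt.2 hUL), measure_empty,
          Set.indicator_of_notMem (fun hmem => h2 hmem.2)]
    · rw [if_neg h1, measure_empty,
        Set.indicator_of_notMem (fun hmem => h1 hmem.1)]
  -- reduce to a Lebesgue integral over (α0, α1)
  set FD : ℝ → ℝ := fun g =>
    Real.exp (-g) * ((1 - Real.exp (-(Uf g)))^M - (1 - Real.exp (-(Lf g)))^M) with hFD
  have hFDcont : Continuous FD := by
    rw [hFD]
    fun_prop
  have hDcont : Continuous (fun g => ((1 - Real.exp (-(Uf g)))^M - (1 - Real.exp (-(Lf g)))^M)) := by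
    fun_prop
  have hμE2 : μ {ω | Ps * Z ω > tau α0 (G ω) ∧
            Z ω > (G ω / α0 - 1) * (P0 * G ω + 1) / Ps ∧
            Real.logb 2 (1 + Ps * Z ω / (P0 * G ω + 1)) < Rs ∧ G ω > α0}
      = ∫⁻ g in Set.Ioo α0 α1, ENNReal.ofReal (FD g) ∂MeasureTheory.volume := by
    have hpdfmeas : Measurable (exponentialPDF 1) := by
      have := (measurable_exponentialPDFReal 1).ennreal_ofReal
      exact this
    rw [hμE, lintegral_congr hker, lintegral_indicator measurableSet_Ioo, hexp_eq,
      setLIntegral_withDensity_eq_setLIntegral_mul _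
        hpdfmeas (hDcont.measurable.ennreal_ofReal) measurableSet_Ioo]
    refine setLIntegral_congr_fun measurableSet_Ioo ?_
    intro g hg
    have hg0 : (0:ℝ) ≤ g := le_trans hα0_pos.le hg.1.le
    simp only [Pi.mul_apply]
    rw [exponentialPDF_of_nonneg hg0, hFD, ← ENNReal.ofReal_mul (by positivity)]
    norm_num
  have hFDnn : ∀ g ∈ Set.Ioo α0 α1, 0 ≤ FD g := by
    intro g hg
    obtain ⟨h1, h2⟩ := hg
    have hgpos : 0 < g := lt_trans hα0_pos h1
    have hg1 : 1 < g / α0 := (one_lt_div hα0_pos).2 h1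
    have hk : (0:ℝ) < P0 * g + 1 := by nlinarith
    have hLpos : 0 < Lf g := by
      rw [hLf]
      exact div_pos (mul_pos (by linarith) hk) hPs
    have hd : g / α0 - 1 < εs := by
      have h3 : g / α0 < α1 / α0 := by
        rw [div_lt_div_iff_of_pos_right hα0_pos]
        exact h2
      have h4 : α1 / α0 = 1 + εs := by
        rw [hα1]; field_simp
      linarith [h3.trans_eq h4]
    have key : (g/α0-1)*(P0*g+1) < εs*(P0*g+1) := mul_lt_mul_of_pos_right hd hk
    have hLU : Lf g < Uf g := by
      calc Lf g = (g/α0-1)*(P0*g+1) * (1/Ps) := by rw [hLf]; ring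
        _ < εs*(P0*g+1)*(1/Ps) := mul_lt_mul_of_pos_right key (by positivity)
        _ = Uf g := by rw [hUf, hαs]; ring
    have hb1 : 0 ≤ 1 - Real.exp (-(Lf g)) := by
      have : Real.exp (-(Lf g)) ≤ 1 := Real.exp_le_one_iff.2 (by linarith)
      linarith
    have hb2 : 1 - Real.exp (-(Lf g)) ≤ 1 - Real.exp (-(Uf g)) := by
      have := Real.exp_le_exp.2 (neg_le_neg hLU.le)
      linarith
    rw [hFD]
    exact mul_nonneg (Real.exp_pos _).le
      (sub_nonneg.2 (pow_le_pow_left₀ hb1 hb2 M))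
  have hInt : MeasureTheory.IntegrableOn FD (Set.Ioo α0 α1) MeasureTheory.volume :=
    (hFDcont.integrableOn_Icc).mono_set Set.Ioo_subset_Icc_self
  have hnnae : 0 ≤ᵐ[MeasureTheory.volume.restrict (Set.Ioo α0 α1)] FD :=
    (ae_restrict_iff' measurableSet_Ioo).2 (Filter.Eventually.of_forall hFDnn)
  have htoReal : (μ {ω | Ps * Z ω > tau α0 (G ω) ∧
            Z ω > (G ω / α0 - 1) * (P0 * G ω + 1) / Ps ∧
            Real.logb 2 (1 + Ps * Z ω / (P0 * G ω + 1)) < Rs ∧ G ω > α0}).toReal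
      = ∫ g in α0..α1, FD g := by
    rw [hμE2, ← ofReal_integral_eq_lintegral_ofReal hInt hnnae,
      ENNReal.toReal_ofReal (MeasureTheory.integral_nonneg_of_ae hnnae),
      intervalIntegral.integral_of_le hα01.le, integral_Ioc_eq_integral_Ioo]
  rw [htoReal]
  have hrw : ∀ g : ℝ, FD g = ∑ i ∈ Finset.Icc 1 M, (M.choose i : ℝ) * (-1)^i *
      (Real.exp (-g) * Real.exp (-((i:ℝ) * (αs*(P0*g+1))))
        - Real.exp (-g) * Real.exp (-((i:ℝ) * ((g/α0-1)*(P0*g+1)/Ps)))) := by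
    intro g
    rw [hFD, hUf, hLf]
    simp only
    rw [F_diff M ((g/α0-1)*(P0*g+1)/Ps) (αs*(P0*g+1)), Finset.mul_sum]
    exact Finset.sum_congr rfl fun i _ => by ring
  rw [intervalIntegral.integral_congr (g := fun g => ∑ i ∈ Finset.Icc 1 M,
      (M.choose i : ℝ) * (-1)^i *
      (Real.exp (-g) * Real.exp (-((i:ℝ) * (αs*(P0*g+1))))
        - Real.exp (-g) * Real.exp (-((i:ℝ) * ((g/α0-1)*(P0*g+1)/Ps)))))
      (fun g _ => hrw g)]
  rw [intervalIntegral.integral_finset_sum (fun i _ =>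
    Continuous.intervalIntegrable (by fun_prop) _ _)]
  refine Finset.sum_congr rfl fun i hi => ?_
  have hi1 : 0 < i := (Finset.mem_Icc.mp hi).1
  rw [intervalIntegral.integral_const_mul,
    intervalIntegral.integral_sub
      (Continuous.intervalIntegrable (by fun_prop) _ _)
      (Continuous.intervalIntegrable (by fun_prop) _ _),
    term1 i α0 α1 αs P0 hαs_pos hP0,
    term2 i hi1 α0 α1 Ps P0 hα0_pos hPs hP0]
end

section
/- The probability QM = P( Ps·Z < τ(G), log2(1 + Ps·Z) < Rs, G > α0 ) equals Σ_{i=0}^{M} C(M,i)·(−1)^i·e^{i/Ps}·u(α0, α1, i/(α0·Ps)) + (1 − e^{−αs})^M·e^{−α1}, where C(M,i) is the binomial coefficient. -/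
open MeasureTheory ProbabilityTheory Real

open Set

lemma my_expMeasure_Iic (s : ℝ) :
    expMeasure 1 (Iic s) = ENNReal.ofReal (1 - Real.exp (-s)) := by
  have hprob : IsProbabilityMeasure (expMeasure 1) := isProbabilityMeasure_expMeasure one_pos
  have h := cdf_expMeasure_eq one_pos s
  rw [cdf_eq_real, measureReal_def] at h
  rcases le_or_gt 0 s with hs | hs
  · rw [if_pos hs, one_mul] at h
    rw [← h, ENNReal.ofReal_toReal (measure_ne_top _ _)]
  · rw [if_neg (not_le.mpr hs)] at h
    have h0 : expMeasure 1 (Iic s) = 0 :=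
      (ENNReal.toReal_eq_zero_iff _).mp h |>.resolve_right (measure_ne_top _ _)
    rw [h0, eq_comm, ENNReal.ofReal_eq_zero]
    have : 1 < Real.exp (-s) := by
      rw [Real.one_lt_exp_iff]; linarith
    linarith

lemma my_expMeasure_Iio (s : ℝ) :
    expMeasure 1 (Iio s) = ENNReal.ofReal (1 - Real.exp (-s)) := by
  have hsing : expMeasure 1 {s} = 0 := by
    rw [expMeasure, gammaMeasure, withDensity_apply _ (measurableSet_singleton s),
      lintegral_singleton]
    simp
  rw [← Iic_diff_right, measure_diff_null hsing, my_expMeasure_Iic]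

lemma my_integral_exp_neg_mul (k a b : ℝ) (hk : k ≠ 0) :
    ∫ x in a..b, Real.exp (-(k*x)) = (Real.exp (-(k*a)) - Real.exp (-(k*b)))/k := by
  have : ∀ x, HasDerivAt (fun y => -Real.exp (-(k*y))/k) (Real.exp (-(k*x))) x := by
    intro x
    have h1 : HasDerivAt (fun y => -(k*y)) (-k) x := by
      have := ((hasDerivAt_id x).const_mul k).neg; simp only [id, mul_one] at this; exact this
    have h2 : HasDerivAt (fun y => -Real.exp (-(k*y))/k) (-(Real.exp (-(k*x)) * -k) / k) x := (h1.exp).neg.div_const k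
    convert h2 using 1
    field_simp
  rw [intervalIntegral.integral_eq_sub_of_hasDerivAt (fun x _ => this x)
    (Continuous.intervalIntegrable (by continuity) a b)]
  ring


set_option maxHeartbeats 2000000 in
/-- closed form for the probability `Q_M` appearing in the proof of
Theorem 1 for the HSIC-PA scheme. -/
theorem hsic_pa_QM_closed_form
    {Ω : Type*} [MeasurableSpace Ω] (μ : Measure Ω) [IsProbabilityMeasure μ]
    (M : ℕ) (hM : 1 ≤ M)
    (P0 Ps R0 Rs : ℝ) (hP0 : 0 < P0) (hPs : 0 < Ps) (hR0 : 0 < R0) (hRs : 0 < Rs)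
    (ε0 εs α0 αs α1 : ℝ)
    (hε0 : ε0 = 2 ^ R0 - 1) (hεs : εs = 2 ^ Rs - 1)
    (hα0 : α0 = ε0 / P0) (hαs : αs = εs / Ps) (hα1 : α1 = (1 + εs) * α0)
    (G : Ω → ℝ) (H : Fin M → Ω → ℝ)
    (hGmeas : Measurable G) (hHmeas : ∀ m, Measurable (H m))
    (hGnn : ∀ ω, 0 ≤ G ω) (hHnn : ∀ m ω, 0 ≤ H m ω)
    (hGdist : Measure.map G μ = expMeasure 1)
    (hHdist : ∀ m, Measure.map (H m) μ = expMeasure 1)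
    (hIndep : iIndepFun
      (Fin.cons G H : Fin (M + 1) → Ω → ℝ) μ)
    (Z : Ω → ℝ) (hZ : ∀ ω, Z ω = ⨆ m : Fin M, H m ω)
    :
    (μ {ω | Ps * Z ω < tau α0 (G ω) ∧
            Real.logb 2 (1 + Ps * Z ω) < Rs ∧ G ω > α0}).toReal =
      (∑ i ∈ Finset.range (M + 1),
        (M.choose i : ℝ) * (-1 : ℝ) ^ i * Real.exp ((i : ℝ) / Ps) *
          uFun α0 α1 ((i : ℝ) / (α0 * Ps))) +
      (1 - Real.exp (-αs)) ^ M * Real.exp (-α1) := by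
  have hMne : (Fin M) → True := fun _ => trivial
  haveI : NeZero M := ⟨by omega⟩
  -- positivity facts
  have hε0pos : 0 < ε0 := by
    rw [hε0, sub_pos]
    exact (Real.one_lt_rpow_iff_of_pos two_pos).mpr (Or.inl ⟨one_lt_two, hR0⟩)
  have hεspos : 0 < εs := by
    rw [hεs, sub_pos]
    exact (Real.one_lt_rpow_iff_of_pos two_pos).mpr (Or.inl ⟨one_lt_two, hRs⟩)
  have hα0pos : 0 < α0 := by rw [hα0]; positivity
  have hαspos : 0 < αs := by rw [hαs]; positivity
  have hc' : (0:ℝ) < α0 * Ps := by positivity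
  have h01 : α0 < α1 := by
    rw [hα1]; nlinarith
  have hα1eq : α1 = α0 + α0 * Ps * αs := by
    rw [hα1, hαs]; field_simp
  -- threshold function
  set t : ℝ → ℝ := fun g => min αs ((g - α0)/(α0*Ps)) with ht
  have htcont : Continuous t :=
    continuous_const.min ((continuous_id.sub continuous_const).div_const _)
  -- Z basic facts
  have hZmeas : Measurable Z := by
    have : Z = fun ω => ⨆ m : Fin M, H m ω := funext hZ
    rw [this]
    exact Measurable.iSup hHmeas
  have hZlt : ∀ ω (s : ℝ), Z ω < s ↔ ∀ m, H m ω < s := by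
    intro ω s
    rw [hZ ω]
    constructor
    · intro h m
      exact lt_of_le_of_lt (le_ciSup (f := fun m => H m ω) (Set.Finite.bddAbove (Set.finite_range _)) m) h
    · intro h
      obtain ⟨m0, hm0⟩ := Finite.exists_max (fun m => H m ω)
      exact lt_of_le_of_lt (ciSup_le hm0) (h m0)
  have hZnn : ∀ ω, 0 ≤ Z ω := by
    intro ω
    rw [hZ ω]
    exact le_ciSup_of_le (f := fun m => H m ω) (Set.Finite.bddAbove (Set.finite_range _)) ⟨0, by omega⟩
      (hHnn _ ω)
  -- event rewriting
  have hevent : {ω | Ps * Z ω < tau α0 (G ω) ∧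
      Real.logb 2 (1 + Ps * Z ω) < Rs ∧ G ω > α0} = {ω | Z ω < t (G ω)} := by
    ext ω
    simp only [Set.mem_setOf_eq, ht, lt_min_iff]
    constructor
    · rintro ⟨h1, h2, h3⟩
      have htau : tau α0 (G ω) = G ω / α0 - 1 := by
        rw [tau, max_eq_right]
        rw [sub_nonneg, le_div_iff₀ hα0pos, one_mul]
        exact h3.le
      rw [htau] at h1
      constructor
      · rw [Real.logb_lt_iff_lt_rpow one_lt_two (by nlinarith [hZnn ω])] at h2
        rw [hαs]
        rw [lt_div_iff₀ hPs]
        rw [hεs]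
        nlinarith
      · rw [lt_div_iff₀ hc']
        nlinarith [mul_lt_mul_of_pos_left h1 hα0pos, div_mul_cancel₀ (G ω) hα0pos.ne']
    · rintro ⟨h1, h2⟩
      have hZω := hZnn ω
      rw [lt_div_iff₀ hc'] at h2
      have h3 : α0 < G ω := by nlinarith
      have h1' : Ps * Z ω < G ω / α0 - 1 := by
        rw [lt_sub_iff_add_lt, lt_div_iff₀ hα0pos]
        nlinarith
      refine ⟨lt_of_lt_of_le h1' (le_max_right _ _), ?_, h3⟩
      rw [Real.logb_lt_iff_lt_rpow one_lt_two (by nlinarith)]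
      rw [hαs, lt_div_iff₀ hPs] at h1
      rw [hεs] at h1
      nlinarith
  rw [hevent]
  haveI : IsProbabilityMeasure (expMeasure 1) := isProbabilityMeasure_expMeasure one_pos
  -- independence of G and Z
  have hmeasAll : ∀ i, Measurable ((Fin.cons G H : Fin (M+1) → Ω → ℝ) i) := by
    intro i
    refine Fin.cases ?_ ?_ i
    · simpa using hGmeas
    · intro m; simpa using hHmeas m
  have hGZindep : IndepFun G Z μ := by
    classical
    have hbase := hIndep.indepFun_finset {0} (Finset.image Fin.succ Finset.univ)
      (by
        simp only [Finset.disjoint_left, Finset.mem_singleton, Finset.mem_image,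
          Finset.mem_univ, true_and]
        rintro i rfl ⟨m, hm⟩
        exact Fin.succ_ne_zero m hm) hmeasAll
    have h1 : Measurable (fun x : ↥({0} : Finset (Fin (M+1))) → ℝ =>
        x ⟨0, Finset.mem_singleton_self 0⟩) := measurable_pi_apply _
    have h2 : Measurable (fun x : ↥(Finset.image Fin.succ (Finset.univ : Finset (Fin M))) → ℝ =>
        ⨆ m : Fin M, x ⟨Fin.succ m, by simp [Fin.succ_ne_zero]⟩) :=
      Measurable.iSup (fun m => measurable_pi_apply _)
    have hcomp := hbase.comp h1 h2
    convert hcomp using 1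
    · rfl
    · funext ω
      show Z ω = _
      rw [hZ ω]
      simp [Function.comp, Fin.cons_succ]
  -- distribution of Z on Iio
  have hlamZ : ∀ s : ℝ, Measure.map Z μ (Set.Iio s)
      = (ENNReal.ofReal (1 - Real.exp (-s)))^M := by
    intro s
    rw [Measure.map_apply hZmeas measurableSet_Iio]
    have hpre : Z ⁻¹' Set.Iio s = ⋂ i ∈ Finset.image Fin.succ (Finset.univ : Finset (Fin M)),
        (Fin.cons G H : Fin (M+1) → Ω → ℝ) i ⁻¹' Set.Iio s := by
      ext ω
      simp only [Set.mem_preimage, Set.mem_Iio, Set.mem_iInter, Finset.mem_image,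
        Finset.mem_univ, true_and]
      rw [hZlt ω s]
      constructor
      · rintro h i ⟨m, rfl⟩
        simpa [Fin.cons_succ] using h m
      · intro h m
        simpa [Fin.cons_succ] using h m.succ ⟨m, rfl⟩
    rw [hpre, hIndep.measure_inter_preimage_eq_mul _ (sets := fun _ => Set.Iio s)
      (fun i _ => measurableSet_Iio)]
    rw [Finset.prod_image (fun x _ y _ h => Fin.succ_injective _ h)]
    have heach : ∀ m : Fin M, μ ((Fin.cons G H : Fin (M+1) → Ω → ℝ) (Fin.succ m) ⁻¹' Set.Iio s)
        = ENNReal.ofReal (1 - Real.exp (-s)) := by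
      intro m
      rw [Fin.cons_succ, ← Measure.map_apply (hHmeas m) measurableSet_Iio, hHdist m,
        my_expMeasure_Iio]
    simp only [heach]
    rw [Finset.prod_const, Finset.card_univ, Fintype.card_fin]
  -- joint law and event measure as lintegral
  have hjoint : Measure.map (fun ω => (G ω, Z ω)) μ
      = (expMeasure 1).prod (Measure.map Z μ) := by
    rw [← hGdist]
    exact (indepFun_iff_map_prod_eq_prod_map_map hGmeas.aemeasurable
      hZmeas.aemeasurable).mp hGZindep
  have hS : MeasurableSet {p : ℝ × ℝ | p.2 < t p.1} :=
    measurableSet_lt measurable_snd (htcont.comp continuous_fst).measurable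
  have hμev : μ {ω | Z ω < t (G ω)}
      = ∫⁻ g, (ENNReal.ofReal (1 - Real.exp (-(t g))))^M ∂(expMeasure 1) := by
    have hp : {ω | Z ω < t (G ω)} = (fun ω => (G ω, Z ω)) ⁻¹' {p : ℝ × ℝ | p.2 < t p.1} := rfl
    rw [hp, ← Measure.map_apply (hGmeas.prodMk hZmeas) hS, hjoint, Measure.prod_apply hS]
    refine lintegral_congr (fun g => ?_)
    have hsec : (Prod.mk g ⁻¹' {p : ℝ × ℝ | p.2 < t p.1}) = Set.Iio (t g) := rfl
    rw [hsec, hlamZ]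
  rw [hμev]
  -- real-valued integrand
  set w : ℝ → ℝ := fun g => (max 0 (1 - Real.exp (-(t g))))^M with hw
  have hwcont : Continuous w :=
    (continuous_const.max (continuous_const.sub (Real.continuous_exp.comp htcont.neg))).pow M
  set h : ℝ → ℝ := fun g => exponentialPDFReal 1 g * w g with hh
  have hwnn : ∀ g, 0 ≤ w g := fun g => pow_nonneg (le_max_left _ _) M
  have hwle : ∀ g, w g ≤ 1 := by
    intro g
    apply pow_le_one₀ (le_max_left _ _)
    apply max_le zero_le_one
    have := Real.exp_pos (-(t g))
    linarith
  have hpdfnn : ∀ g, 0 ≤ exponentialPDFReal 1 g := exponentialPDFReal_nonneg one_pos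
  have hpdf_eq : ∀ g, exponentialPDFReal 1 g = if 0 ≤ g then Real.exp (-g) else 0 := by
    intro g
    by_cases hg : 0 ≤ g <;>
      simp [exponentialPDFReal, gammaPDFReal, Real.Gamma_one, hg]
  have hhnn : ∀ g, 0 ≤ h g := fun g => mul_nonneg (hpdfnn g) (hwnn g)
  have hmeasH : Measurable h := (measurable_exponentialPDFReal 1).mul hwcont.measurable
  have hbound : Integrable (Set.indicator (Set.Ici (0:ℝ)) (fun g => Real.exp (-g))) := by
    apply MeasureTheory.IntegrableOn.integrable_indicator _ measurableSet_Ici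
    have h1 : IntegrableOn (fun x : ℝ => Real.exp (-1 * x)) (Set.Ioi (-1)) :=
      exp_neg_integrableOn_Ioi (-1) one_pos
    have h2 : IntegrableOn (fun x : ℝ => Real.exp (-x)) (Set.Ioi (-1)) := by
      simpa using h1
    exact h2.mono_set (fun x hx => lt_of_lt_of_le (show (-1:ℝ) < 0 by norm_num) hx)
  have hInt : Integrable h := by
    refine Integrable.mono' hbound hmeasH.aestronglyMeasurable ?_
    refine Filter.Eventually.of_forall (fun g => ?_)
    rw [Real.norm_eq_abs, abs_of_nonneg (hhnn g)]
    show exponentialPDFReal 1 g * w g ≤ _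
    rw [hpdf_eq g]
    by_cases hg : 0 ≤ g
    · rw [if_pos hg, Set.indicator_of_mem (show g ∈ Set.Ici (0:ℝ) from hg)]
      calc Real.exp (-g) * w g ≤ Real.exp (-g) * 1 :=
            mul_le_mul_of_nonneg_left (hwle g) (Real.exp_pos _).le
        _ = Real.exp (-g) := mul_one _
    · rw [if_neg hg, Set.indicator_of_notMem (show g ∉ Set.Ici (0:ℝ) from hg), zero_mul]
  -- lintegral to Bochner integral
  have hlin : ∫⁻ g, (ENNReal.ofReal (1 - Real.exp (-(t g))))^M ∂(expMeasure 1)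
      = ENNReal.ofReal (∫ g, h g) := by
    have hofmax : ∀ x : ℝ, ENNReal.ofReal x = ENNReal.ofReal (max 0 x) := by
      intro x
      rcases le_total x 0 with hx | hx
      · rw [ENNReal.ofReal_of_nonpos hx, max_eq_left hx, ENNReal.ofReal_zero]
      · rw [max_eq_right hx]
    have hmi : Measurable (fun g => (ENNReal.ofReal (1 - Real.exp (-(t g))))^M) :=
      ((ENNReal.measurable_ofReal.comp
        ((continuous_const.sub (Real.continuous_exp.comp htcont.neg)).measurable)).pow_const M)
    have hpdfmeas : Measurable (gammaPDF 1 1) := by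
      unfold gammaPDF
      exact ENNReal.measurable_ofReal.comp (measurable_gammaPDFReal 1 1)
    rw [expMeasure, gammaMeasure, lintegral_withDensity_eq_lintegral_mul _ hpdfmeas hmi]
    rw [MeasureTheory.ofReal_integral_eq_lintegral_ofReal hInt
      (Filter.Eventually.of_forall hhnn)]
    refine lintegral_congr (fun g => ?_)
    simp only [Pi.mul_apply]
    show ENNReal.ofReal (exponentialPDFReal 1 g) * (ENNReal.ofReal (1 - Real.exp (-(t g))))^M
      = ENNReal.ofReal (exponentialPDFReal 1 g * w g)
    rw [hofmax (1 - Real.exp (-(t g))), ← ENNReal.ofReal_pow (le_max_left _ _),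
      ← ENNReal.ofReal_mul (hpdfnn g)]
  rw [hlin, ENNReal.toReal_ofReal (integral_nonneg hhnn)]
  -- restrict to Ioi α0
  have hzero : ∀ g, g ∉ Set.Ioi α0 → h g = 0 := by
    intro g hg
    simp only [Set.mem_Ioi, not_lt] at hg
    by_cases h0 : 0 ≤ g
    · have htg : t g ≤ 0 :=
        le_trans (min_le_right _ _) (div_nonpos_of_nonpos_of_nonneg (by linarith) hc'.le)
      have hle : 1 - Real.exp (-(t g)) ≤ 0 := by
        have := Real.one_le_exp (by linarith : (0:ℝ) ≤ -(t g))
        linarith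
      show exponentialPDFReal 1 g * w g = 0
      have : w g = 0 := by
        rw [hw]
        simp only
        rw [max_eq_left hle, zero_pow (by omega : M ≠ 0)]
      rw [this, mul_zero]
    · show exponentialPDFReal 1 g * w g = 0
      rw [hpdf_eq g, if_neg h0, zero_mul]
  have hindeq : (∫ g, h g) = ∫ g in Set.Ioi α0, h g := by
    rw [← integral_indicator measurableSet_Ioi]
    refine integral_congr_ae (Filter.Eventually.of_forall (fun g => ?_))
    by_cases hg : g ∈ Set.Ioi α0
    · rw [Set.indicator_of_mem hg]
    · rw [Set.indicator_of_notMem hg, hzero g hg]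
  rw [hindeq]
  have hsplit : Set.Ioi α0 = Set.Ioc α0 α1 ∪ Set.Ioi α1 := (Set.Ioc_union_Ioi_eq_Ioi h01.le).symm
  rw [hsplit, setIntegral_union (Set.Ioc_disjoint_Ioi le_rfl) measurableSet_Ioi
    hInt.integrableOn hInt.integrableOn]
  -- tail integral
  have htail : ∫ g in Set.Ioi α1, h g = (1 - Real.exp (-αs))^M * Real.exp (-α1) := by
    have heq : Set.EqOn h (fun g => Real.exp (-g) * (1 - Real.exp (-αs))^M) (Set.Ioi α1) := by
      intro g hg
      simp only [Set.mem_Ioi] at hg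
      have hg0 : 0 ≤ g := by nlinarith
      have htg : t g = αs := by
        apply min_eq_left
        rw [le_div_iff₀ hc']
        nlinarith
      show exponentialPDFReal 1 g * w g = _
      rw [hpdf_eq g, if_pos hg0, hw]
      simp only [htg]
      rw [max_eq_right (by
        have := Real.exp_le_one_iff.mpr (by linarith : -αs ≤ 0)
        linarith)]
    rw [setIntegral_congr_fun measurableSet_Ioi heq, integral_mul_const,
      integral_exp_neg_Ioi]
    ring
  -- main integral
  have hmain : ∫ g in Set.Ioc α0 α1, h g
      = ∑ i ∈ Finset.range (M+1), (M.choose i : ℝ) * (-1 : ℝ)^i * Real.exp ((i:ℝ)/Ps) *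
          uFun α0 α1 ((i:ℝ)/(α0*Ps)) := by
    have heq : Set.EqOn h (fun g => ∑ i ∈ Finset.range (M+1),
        (M.choose i : ℝ) * (-1 : ℝ)^i * Real.exp ((i:ℝ)/Ps) *
          Real.exp (-(((i:ℝ)/(α0*Ps) + 1) * g))) (Set.Ioc α0 α1) := by
      intro g hg
      obtain ⟨hg1, hg2⟩ := hg
      have hg0 : 0 ≤ g := le_trans hα0pos.le hg1.le
      have htg : t g = (g - α0)/(α0*Ps) := by
        apply min_eq_right
        rw [div_le_iff₀ hc']
        nlinarith
      have hu0 : 0 ≤ (g - α0)/(α0*Ps) := div_nonneg (by linarith) hc'.le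
      show exponentialPDFReal 1 g * w g = _
      rw [hpdf_eq g, if_pos hg0, hw]
      simp only [htg]
      rw [max_eq_right (by
        have := Real.exp_le_one_iff.mpr (by linarith : -((g - α0)/(α0*Ps)) ≤ 0)
        linarith)]
      have hbin : (1 - Real.exp (-((g - α0) / (α0 * Ps))))^M
          = ∑ i ∈ Finset.range (M+1), (-Real.exp (-((g - α0) / (α0 * Ps))))^i * 1^(M-i) *
              (M.choose i : ℝ) := by
        rw [← add_pow]
        ring_nf
      rw [hbin, Finset.mul_sum]
      refine Finset.sum_congr rfl (fun i _ => ?_)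
      rw [neg_pow, one_pow, ← Real.exp_nat_mul]
      have hexp : Real.exp (-g) * Real.exp ((i:ℝ) * -((g - α0) / (α0 * Ps)))
          = Real.exp ((i:ℝ)/Ps) * Real.exp (-(((i:ℝ)/(α0*Ps) + 1) * g)) := by
        rw [← Real.exp_add, ← Real.exp_add]
        congr 1
        field_simp
        ring
      linear_combination ((-1:ℝ)^i * (M.choose i : ℝ)) * hexp
    rw [setIntegral_congr_fun measurableSet_Ioc heq, ← intervalIntegral.integral_of_le h01.le,
      intervalIntegral.integral_finset_sum (fun i _ =>
        (Continuous.intervalIntegrable (by fun_prop) _ _))]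
    refine Finset.sum_congr rfl (fun i _ => ?_)
    have hk : ((i:ℝ)/(α0*Ps) + 1) ≠ 0 := by positivity
    rw [intervalIntegral.integral_const_mul, my_integral_exp_neg_mul _ _ _ hk]
    show _ = (M.choose i : ℝ) * (-1 : ℝ)^i * Real.exp ((i:ℝ)/Ps) *
      ((Real.exp (-α0 * ((i:ℝ)/(α0*Ps) + 1)) - Real.exp (-α1 * ((i:ℝ)/(α0*Ps) + 1)))
        / ((i:ℝ)/(α0*Ps) + 1))
    rw [show -(((i:ℝ)/(α0*Ps) + 1) * α0) = -α0 * ((i:ℝ)/(α0*Ps) + 1) from by ring,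
      show -(((i:ℝ)/(α0*Ps) + 1) * α1) = -α1 * ((i:ℝ)/(α0*Ps) + 1) from by ring]
  rw [htail, hmain]
end

section
/- The probability QM+1 = P( max{ log2(1 + Ps·Z/(P0·G + 1)), log2(1 + τ(G)) } < Rs, G < α0 ) equals Σ_{i=0}^{M} C(M,i)·(−1)^i·e^{−αs·i}·(1 − e^{−(αs·P0·i + 1)·α0})/(αs·P0·i + 1), where C(M,i) is the binomial coefficient. -/
open MeasureTheory ProbabilityTheory Real

/-- The exponential distribution with rate 1 gives `Iio t` measure `1 - e^{-t}`
(also valid for `t ≤ 0`, where both sides vanish). -/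
lemma expMeasure_Iio (t : ℝ) :
    expMeasure 1 (Set.Iio t) = ENNReal.ofReal (1 - Real.exp (-t)) := by
  have hP : IsProbabilityMeasure (expMeasure 1) := isProbabilityMeasure_expMeasure one_pos
  have hac : expMeasure 1 ≪ volume := by
    rw [expMeasure, gammaMeasure]
    exact withDensity_absolutelyContinuous _ _
  have h1 : expMeasure 1 {t} = 0 := hac (measure_singleton t)
  have hIic : expMeasure 1 (Set.Iic t) = ENNReal.ofReal (1 - Real.exp (-t)) := by
    rw [← ofReal_cdf (expMeasure 1) t]
    have hc : cdf (expMeasure 1) t = if 0 ≤ t then 1 - Real.exp (-(1 * t)) else 0 :=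
      cdf_expMeasure_eq one_pos t
    rw [hc]
    split_ifs with h
    · norm_num
    · rw [ENNReal.ofReal_zero]
      symm
      rw [ENNReal.ofReal_eq_zero]
      have : (1:ℝ) ≤ Real.exp (-t) := Real.one_le_exp (by linarith)
      linarith
  have hsplit : expMeasure 1 (Set.Iic t) = expMeasure 1 (Set.Iio t) + expMeasure 1 {t} := by
    rw [← Set.Iio_union_right, measure_union (by simp) (measurableSet_singleton t)]
  rw [← hIic, hsplit, h1, add_zero]

/-- closed form for the probability `Q_{M+1}` appearing in the proof of
Theorem 1 for the HSIC-PA scheme. -/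
theorem hsic_pa_QM1_closed_form
    {Ω : Type*} [MeasurableSpace Ω] (μ : Measure Ω) [IsProbabilityMeasure μ]
    (M : ℕ) (hM : 1 ≤ M)
    (P0 Ps R0 Rs : ℝ) (hP0 : 0 < P0) (hPs : 0 < Ps) (hR0 : 0 < R0) (hRs : 0 < Rs)
    (ε0 εs α0 αs α1 : ℝ)
    (hε0 : ε0 = 2 ^ R0 - 1) (hεs : εs = 2 ^ Rs - 1)
    (hα0 : α0 = ε0 / P0) (hαs : αs = εs / Ps) (hα1 : α1 = (1 + εs) * α0)
    (G : Ω → ℝ) (H : Fin M → Ω → ℝ)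
    (hGmeas : Measurable G) (hHmeas : ∀ m, Measurable (H m))
    (hGnn : ∀ ω, 0 ≤ G ω) (hHnn : ∀ m ω, 0 ≤ H m ω)
    (hGdist : Measure.map G μ = expMeasure 1)
    (hHdist : ∀ m, Measure.map (H m) μ = expMeasure 1)
    (hIndep : iIndepFun
      (Fin.cons G H : Fin (M + 1) → Ω → ℝ) μ)
    (Z : Ω → ℝ) (hZ : ∀ ω, Z ω = ⨆ m : Fin M, H m ω)
    :
    (μ {ω | max (Real.logb 2 (1 + Ps * Z ω / (P0 * G ω + 1)))
              (Real.logb 2 (1 + tau α0 (G ω))) < Rs ∧ G ω < α0}).toReal =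
      ∑ i ∈ Finset.range (M + 1),
        (M.choose i : ℝ) * (-1 : ℝ) ^ i * Real.exp (-αs * i) *
          (1 - Real.exp (-(αs * P0 * i + 1) * α0)) / (αs * P0 * i + 1) := by
  haveI hPexp : IsProbabilityMeasure (expMeasure 1) := isProbabilityMeasure_expMeasure one_pos
  haveI hne : Nonempty (Fin M) := ⟨⟨0, hM⟩⟩
  have hεs_pos : 0 < εs := by
    rw [hεs]
    have : (1:ℝ) < 2 ^ Rs :=
      (Real.one_lt_rpow_iff_of_pos two_pos).2 (Or.inl ⟨one_lt_two, hRs⟩)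
    linarith
  have hε0_pos : 0 < ε0 := by
    rw [hε0]
    have : (1:ℝ) < 2 ^ R0 :=
      (Real.one_lt_rpow_iff_of_pos two_pos).2 (Or.inl ⟨one_lt_two, hR0⟩)
    linarith
  have hα0_pos : 0 < α0 := hα0 ▸ div_pos hε0_pos hP0
  have hαs_pos : 0 < αs := hαs ▸ div_pos hεs_pos hPs
  -- the target set in the product space
  set S₀ : Set (Fin (M + 1) → ℝ) :=
    {x | x 0 < α0 ∧ ∀ m : Fin M, x m.succ < αs * (P0 * x 0 + 1)} with hS₀def
  set F : Ω → (Fin (M + 1) → ℝ) := fun ω i => (Fin.cons G H : Fin (M+1) → Ω → ℝ) i ω with hFdef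
  -- Step 1 : rewrite the event
  have hset : {ω | max (Real.logb 2 (1 + Ps * Z ω / (P0 * G ω + 1)))
              (Real.logb 2 (1 + tau α0 (G ω))) < Rs ∧ G ω < α0} = F ⁻¹' S₀ := by
    ext ω
    have hbdd : BddAbove (Set.range fun m => H m ω) := (Set.finite_range _).bddAbove
    have hden : (0:ℝ) < P0 * G ω + 1 := by nlinarith [hGnn ω]
    have hZnn : 0 ≤ Z ω := by
      rw [hZ ω]
      exact le_trans (hHnn ⟨0, hM⟩ ω) (le_ciSup hbdd ⟨0, hM⟩)
    have hpos : (0:ℝ) < 1 + Ps * Z ω / (P0 * G ω + 1) := by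
      have : (0:ℝ) ≤ Ps * Z ω / (P0 * G ω + 1) :=
        div_nonneg (mul_nonneg hPs.le hZnn) hden.le
      linarith
    simp only [Set.mem_setOf_eq, Set.mem_preimage, hS₀def, hFdef, Fin.cons_zero, Fin.cons_succ]
    constructor
    · rintro ⟨hmax, hg⟩
      refine ⟨hg, fun m => ?_⟩
      have hA : Real.logb 2 (1 + Ps * Z ω / (P0 * G ω + 1)) < Rs := (max_lt_iff.1 hmax).1
      have h2 : 1 + Ps * Z ω / (P0 * G ω + 1) < 2 ^ Rs :=
        (Real.logb_lt_iff_lt_rpow one_lt_two hpos).1 hA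
      have hx : Ps * Z ω / (P0 * G ω + 1) < εs := by rw [hεs]; linarith
      have hz : Z ω < αs * (P0 * G ω + 1) := by
        rw [div_lt_iff₀ hden] at hx
        rw [hαs, div_mul_eq_mul_div, lt_div_iff₀ hPs]
        nlinarith
      calc H m ω ≤ Z ω := by rw [hZ ω]; exact le_ciSup hbdd m
        _ < αs * (P0 * G ω + 1) := hz
    · rintro ⟨hg, hHlt⟩
      have hz : Z ω < αs * (P0 * G ω + 1) := by
        obtain ⟨m0, hm0⟩ := Finite.exists_max (fun m => H m ω)
        rw [hZ ω]
        exact lt_of_le_of_lt (ciSup_le hm0) (hHlt m0)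
      refine ⟨max_lt ?_ ?_, hg⟩
      · rw [Real.logb_lt_iff_lt_rpow one_lt_two hpos]
        have hx : Ps * Z ω / (P0 * G ω + 1) < εs := by
          rw [div_lt_iff₀ hden]
          have : Ps * αs = εs := by rw [hαs]; field_simp
          nlinarith
        rw [hεs] at hx
        linarith
      · have htau : tau α0 (G ω) = 0 := by
          have : G ω / α0 < 1 := (div_lt_one hα0_pos).2 hg
          simp only [tau]
          rw [max_eq_left (by linarith)]
        rw [htau]
        simpa using hRs
  -- Step 2 : joint law is the product measure
  have hFmeas : Measurable F := by
    apply measurable_pi_lambda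
    intro i
    refine Fin.cases ?_ ?_ i
    · simpa [hFdef] using hGmeas
    · intro m; simpa [hFdef] using hHmeas m
  have hmap : Measure.map F μ = Measure.pi (fun _ : Fin (M + 1) => expMeasure 1) := by
    refine (Measure.pi_eq (μ := fun _ : Fin (M+1) => expMeasure 1) fun s hs => ?_).symm
    rw [Measure.map_apply hFmeas (MeasurableSet.univ_pi hs)]
    have hpre : F ⁻¹' (Set.univ.pi s) = ⋂ i, (Fin.cons G H : Fin (M+1) → Ω → ℝ) i ⁻¹' s i := by
      ext ω; simp [hFdef, Set.mem_univ_pi]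
    rw [hpre, hIndep.meas_iInter (fun i => ⟨s i, hs i, rfl⟩)]
    refine Finset.prod_congr rfl fun i _ => ?_
    refine Fin.cases ?_ ?_ i
    · rw [Fin.cons_zero, ← Measure.map_apply hGmeas (hs 0), hGdist]
    · intro m
      rw [Fin.cons_succ, ← Measure.map_apply (hHmeas m) (hs m.succ), hHdist m]
  have hS₀meas : MeasurableSet S₀ := by
    have h1 : MeasurableSet {x : Fin (M + 1) → ℝ | x 0 < α0} :=
      measurableSet_lt (measurable_pi_apply 0) measurable_const
    have h2 : ∀ m : Fin M,
        MeasurableSet {x : Fin (M + 1) → ℝ | x m.succ < αs * (P0 * x 0 + 1)} := fun m =>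
      measurableSet_lt (measurable_pi_apply _)
        (by fun_prop)
    have : S₀ = {x : Fin (M + 1) → ℝ | x 0 < α0} ∩
        ⋂ m : Fin M, {x : Fin (M + 1) → ℝ | x m.succ < αs * (P0 * x 0 + 1)} := by
      ext x; simp [hS₀def]
    rw [this]
    exact h1.inter (MeasurableSet.iInter h2)
  rw [hset, ← Measure.map_apply hFmeas hS₀meas, hmap]
  -- Step 3 : split off the first coordinate
  set S' : Set (ℝ × (Fin M → ℝ)) :=
    {p | p.1 < α0 ∧ ∀ m : Fin M, p.2 m < αs * (P0 * p.1 + 1)} with hS'def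
  have hS'meas : MeasurableSet S' := by
    have h1 : MeasurableSet {p : ℝ × (Fin M → ℝ) | p.1 < α0} :=
      measurableSet_lt measurable_fst measurable_const
    have h2 : ∀ m : Fin M,
        MeasurableSet {p : ℝ × (Fin M → ℝ) | p.2 m < αs * (P0 * p.1 + 1)} := fun m =>
      measurableSet_lt (measurable_snd.eval)
        (((measurable_fst.const_mul P0).add_const 1).const_mul αs)
    have : S' = {p : ℝ × (Fin M → ℝ) | p.1 < α0} ∩
        ⋂ m : Fin M, {p : ℝ × (Fin M → ℝ) | p.2 m < αs * (P0 * p.1 + 1)} := by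
      ext p; simp [hS'def]
    rw [this]
    exact h1.inter (MeasurableSet.iInter h2)
  have hmp := measurePreserving_piFinSuccAbove (fun _ : Fin (M + 1) => expMeasure 1) 0
  have hpre : (MeasurableEquiv.piFinSuccAbove (fun _ : Fin (M + 1) => ℝ) 0) ⁻¹' S' = S₀ := by
    ext x
    simp [hS'def, hS₀def, MeasurableEquiv.piFinSuccAbove, Fin.zero_succAbove, Fin.tail]
  have hν : (Measure.pi (fun _ : Fin (M + 1) => expMeasure 1)) S₀ =
      ((expMeasure 1).prod (Measure.pi fun _ : Fin M => expMeasure 1)) S' := by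
    rw [← hpre]
    exact hmp.measure_preimage hS'meas.nullMeasurableSet
  rw [hν, Measure.prod_apply hS'meas]
  -- Step 4 : compute the inner measure
  have hker : ∀ g : ℝ,
      (Measure.pi fun _ : Fin M => expMeasure 1) (Prod.mk g ⁻¹' S') =
        Set.indicator (Set.Iio α0)
          (fun g => (ENNReal.ofReal (1 - Real.exp (-(αs * (P0 * g + 1))))) ^ M) g := by
    intro g
    by_cases hg : g < α0
    · rw [Set.indicator_of_mem (Set.mem_Iio.2 hg)]
      have hpre2 : Prod.mk g ⁻¹' S' =
          Set.univ.pi (fun _ : Fin M => Set.Iio (αs * (P0 * g + 1))) := by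
        ext y; simp [hS'def, hg, Set.mem_univ_pi]
      rw [hpre2, Measure.pi_pi]
      simp [expMeasure_Iio]
    · rw [Set.indicator_of_notMem (by simpa using hg)]
      have hpre2 : Prod.mk g ⁻¹' S' = (∅ : Set (Fin M → ℝ)) := by
        ext y; simp [hS'def, hg]
      simp [hpre2]
  rw [lintegral_congr hker, lintegral_indicator measurableSet_Iio _]
  -- Step 5 : unfold the density of the exponential measure
  have hexp_eq : expMeasure 1 = volume.withDensity (exponentialPDF 1) := rfl
  have hpdf_meas : Measurable (exponentialPDF 1) :=
    ENNReal.measurable_ofReal.comp (measurable_exponentialPDFReal 1)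
  have hφmeas : Measurable fun g : ℝ =>
      (ENNReal.ofReal (1 - Real.exp (-(αs * (P0 * g + 1))))) ^ M := by
    apply Measurable.pow_const
    exact ENNReal.measurable_ofReal.comp (by fun_prop)
  rw [hexp_eq, setLIntegral_withDensity_eq_setLIntegral_mul _ hpdf_meas hφmeas measurableSet_Iio]
  -- Step 6 : pass to a Bochner integral
  set f : ℝ → ℝ := Set.indicator (Set.Ici 0)
      (fun g => Real.exp (-g) * (1 - Real.exp (-(αs * (P0 * g + 1)))) ^ M) with hfdef
  have hpt : ∀ g : ℝ,
      (exponentialPDF 1 * fun g => (ENNReal.ofReal (1 - Real.exp (-(αs * (P0 * g + 1))))) ^ M) g =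
        ENNReal.ofReal (f g) := by
    intro g
    simp only [Pi.mul_apply]
    by_cases hg : (0:ℝ) ≤ g
    · rw [hfdef, Set.indicator_of_mem (Set.mem_Ici.2 hg), exponentialPDF_of_nonneg hg]
      have hc : (0:ℝ) ≤ αs * (P0 * g + 1) := by positivity
      have h1 : (0:ℝ) ≤ 1 - Real.exp (-(αs * (P0 * g + 1))) := by
        have := Real.exp_le_one_iff.2 (by linarith : -(αs * (P0 * g + 1)) ≤ 0)
        linarith
      rw [← ENNReal.ofReal_pow h1, ← ENNReal.ofReal_mul (by positivity)]
      norm_num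
    · rw [hfdef, Set.indicator_of_notMem (by simpa using hg), exponentialPDF_of_neg (lt_of_not_ge hg),
        ENNReal.ofReal_zero, zero_mul]
  rw [lintegral_congr hpt]
  have hfmeas : AEStronglyMeasurable f (volume.restrict (Set.Iio α0)) := by
    apply Measurable.aestronglyMeasurable
    apply Measurable.indicator _ measurableSet_Ici
    fun_prop
  have hfnn : 0 ≤ᵐ[volume.restrict (Set.Iio α0)] f := by
    refine Filter.Eventually.of_forall fun g => ?_
    apply Set.indicator_nonneg
    intro x hx
    have hc : (0:ℝ) ≤ αs * (P0 * x + 1) := by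
      have : (0:ℝ) ≤ x := hx
      positivity
    have h1 : (0:ℝ) ≤ 1 - Real.exp (-(αs * (P0 * x + 1))) := by
      have := Real.exp_le_one_iff.2 (by linarith : -(αs * (P0 * x + 1)) ≤ 0)
      linarith
    positivity
  rw [← integral_eq_lintegral_of_nonneg_ae hfnn hfmeas]
  -- Step 7 : reduce to an interval integral
  rw [hfdef, setIntegral_indicator measurableSet_Ici, Set.Iio_inter_Ici,
    integral_Ico_eq_integral_Ioo, ← integral_Ioc_eq_integral_Ioo,
    ← intervalIntegral.integral_of_le hα0_pos.le]
  -- Step 8 : binomial expansion and evaluation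
  have hintegrand : ∀ g : ℝ, Real.exp (-g) * (1 - Real.exp (-(αs * (P0 * g + 1)))) ^ M =
      ∑ i ∈ Finset.range (M + 1),
        (M.choose i : ℝ) * (-1 : ℝ) ^ i * Real.exp (-αs * i) *
          Real.exp (-(αs * P0 * i + 1) * g) := by
    intro g
    have hb : (1 - Real.exp (-(αs * (P0 * g + 1)))) ^ M =
        ∑ i ∈ Finset.range (M + 1),
          (-Real.exp (-(αs * (P0 * g + 1)))) ^ i * 1 ^ (M - i) * (M.choose i : ℝ) := by
      rw [show (1 : ℝ) - Real.exp (-(αs * (P0 * g + 1))) =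
          -Real.exp (-(αs * (P0 * g + 1))) + 1 by ring]
      exact add_pow _ _ M
    rw [hb, Finset.mul_sum]
    refine Finset.sum_congr rfl fun i _ => ?_
    rw [one_pow, mul_one, neg_pow, ← Real.exp_nat_mul]
    have h1 : Real.exp (-g) * Real.exp (↑i * -(αs * (P0 * g + 1))) =
        Real.exp (-αs * ↑i) * Real.exp (-(αs * P0 * ↑i + 1) * g) := by
      rw [← Real.exp_add, ← Real.exp_add]
      congr 1
      ring
    linear_combination ((M.choose i : ℝ) * (-1 : ℝ) ^ i) * h1
  calc (∫ g in (0:ℝ)..α0, Real.exp (-g) * (1 - Real.exp (-(αs * (P0 * g + 1)))) ^ M)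
      = ∫ g in (0:ℝ)..α0, ∑ i ∈ Finset.range (M + 1),
          (M.choose i : ℝ) * (-1 : ℝ) ^ i * Real.exp (-αs * i) *
            Real.exp (-(αs * P0 * i + 1) * g) := by simp only [hintegrand]
    _ = ∑ i ∈ Finset.range (M + 1), ∫ g in (0:ℝ)..α0,
          (M.choose i : ℝ) * (-1 : ℝ) ^ i * Real.exp (-αs * i) *
            Real.exp (-(αs * P0 * i + 1) * g) :=
        intervalIntegral.integral_finset_sum
          (fun i _ => Continuous.intervalIntegrable (by fun_prop) _ _)
    _ = ∑ i ∈ Finset.range (M + 1),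
        (M.choose i : ℝ) * (-1 : ℝ) ^ i * Real.exp (-αs * i) *
          (1 - Real.exp (-(αs * P0 * i + 1) * α0)) / (αs * P0 * i + 1) := by
      refine Finset.sum_congr rfl fun i _ => ?_
      have hk : (0:ℝ) < αs * P0 * (i:ℝ) + 1 := by positivity
      have hd : (-(αs * P0 * (i:ℝ) + 1)) ≠ 0 := ne_of_lt (by linarith)
      have hint : ∫ g in (0:ℝ)..α0, Real.exp (-(αs * P0 * (i:ℝ) + 1) * g) =
          (1 - Real.exp (-(αs * P0 * (i:ℝ) + 1) * α0)) / (αs * P0 * (i:ℝ) + 1) := by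
        rw [intervalIntegral.integral_comp_mul_left Real.exp hd, integral_exp,
          mul_zero, Real.exp_zero, smul_eq_mul, eq_div_iff hk.ne', inv_neg]
        linear_combination (1 - Real.exp (-(αs * P0 * (i:ℝ) + 1) * α0)) *
          mul_inv_cancel₀ hk.ne'
      rw [intervalIntegral.integral_const_mul, hint, mul_div_assoc]
end
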